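/- arXiv:2310.03637 — 4 statements merged into one kernel-verified Lean document; each statement's English description precedes it below -/
import Mathlib

section
/- Let K be an infinite field, let P = K[x_1,…,x_n], and let I ⊆ P[x_0] be a homogeneous ideal whose projective zero locus Z_+(I) over the algebraic closure of K is nonempty and finite. Then I is in generic coordinates if and only if I^sat = (I^deh)^h, i.e., the saturation of I with respect to the maximal homogeneous ideal equals the homogenization of the dehomogenization of I. -/
open MvPolynomial
open Fin.NatCast

/-! ### Term orders, initial ideals and Gröbner bases -/

/-- Total degree of an exponent vector. -/
def expDeg {σ : Type*} (a : σ →₀ ℕ) : ℕ := a.sum fun _ e => e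

/-- Degree reverse lexicographic strict order on exponent vectors; `sig j i` reads
"`j` is strictly less significant than `i`".  `a` is DRL-smaller than `b` iff its total degree
is smaller, or the degrees agree and at the least significant variable where they differ the
exponent of `a` is larger. -/
def drlLT {σ : Type*} (sig : σ → σ → Prop) (a b : σ →₀ ℕ) : Prop :=
  expDeg a < expDeg b ∨
    (expDeg a = expDeg b ∧ ∃ i, b i < a i ∧ ∀ j, sig j i → a j = b j)

/-- Lexicographic strict order on exponent vectors; `sig i j` reads "`i` is strictly less
significant than `j`".  `a` is LEX-smaller than `b` iff at the most significant variable where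
they differ the exponent of `a` is smaller. -/
def lexLT {σ : Type*} (sig : σ → σ → Prop) (a b : σ →₀ ℕ) : Prop :=
  ∃ i, a i < b i ∧ ∀ j, sig i j → a j = b j

/-- Significance relation on `Fin N` for which the variable significance is strictly
decreasing in the index (`x_0 > x_1 > ⋯`):  `sigDes i j` iff `i` is less significant
than `j`, i.e. `j < i`. -/
def sigDes {N : ℕ} (i j : Fin N) : Prop := j < i

/-- Significance relation on `Fin (N+1)` for a homogenized polynomial ring: the homogenization
variable `x_0` (index `0`) is the least significant variable, and among the remaining variables
the significance is strictly decreasing in the index. -/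
def sigH {N : ℕ} (i j : Fin (N + 1)) : Prop := j ≠ 0 ∧ (i = 0 ∨ j < i)

/-- `a` is the leading monomial (exponent vector) of `f` w.r.t. the strict term order `lt`. -/
def IsLeadMono {σ K : Type*} [CommSemiring K] (lt : (σ →₀ ℕ) → (σ →₀ ℕ) → Prop)
    (f : MvPolynomial σ K) (a : σ →₀ ℕ) : Prop :=
  a ∈ f.support ∧ ∀ b ∈ f.support, b ≠ a → lt b a

/-- The initial ideal of `I` w.r.t. the strict term order `lt`: the ideal generated by the
leading monomials of the nonzero elements of `I`. -/
noncomputable def initialIdeal {σ K : Type*} [CommSemiring K]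
    (lt : (σ →₀ ℕ) → (σ →₀ ℕ) → Prop) (I : Ideal (MvPolynomial σ K)) :
    Ideal (MvPolynomial σ K) :=
  Ideal.span {mf | ∃ f ∈ I, f ≠ 0 ∧ ∃ a, IsLeadMono lt f a ∧ mf = monomial a (1 : K)}

/-- `G` is a Gröbner basis of `I` w.r.t. the strict term order `lt`: `G ⊆ I` and the leading
monomials of the elements of `G` generate the initial ideal of `I`. -/
def IsGroebner {σ K : Type*} [CommSemiring K] (lt : (σ →₀ ℕ) → (σ →₀ ℕ) → Prop)
    (G : Set (MvPolynomial σ K)) (I : Ideal (MvPolynomial σ K)) : Prop :=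
  G ⊆ (I : Set (MvPolynomial σ K)) ∧
    Ideal.span {mf | ∃ g ∈ G, g ≠ 0 ∧ ∃ a, IsLeadMono lt g a ∧ mf = monomial a (1 : K)}
      = initialIdeal lt I

/-! ### Saturation, projective zero loci, generic coordinates, homogenization -/

/-- The saturation `I : (x_0, …, x_n)^∞ = ⋃_k (I : (x_0, …, x_n)^k)` of an ideal of a
polynomial ring with respect to the maximal ideal generated by all the variables. -/
noncomputable def maxSat {K : Type*} [Field K] {σ : Type*}
    (I : Ideal (MvPolynomial σ K)) : Ideal (MvPolynomial σ K) :=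
  ⨆ k : ℕ, Submodule.colon I (((Ideal.span (Set.range (X : σ → MvPolynomial σ K))) ^ k :
    Ideal (MvPolynomial σ K)) : Set (MvPolynomial σ K))

/-- The projective zero locus of `I` over the algebraic closure of `K`. -/
noncomputable def projZerosBar {K : Type*} [Field K] {σ : Type*}
    (I : Ideal (MvPolynomial σ K)) :
    Set (Projectivization (AlgebraicClosure K) (σ → AlgebraicClosure K)) :=
  {x | ∀ f ∈ I, eval x.rep (map (algebraMap K (AlgebraicClosure K)) f) = 0}

/-- `I` is in generic coordinates (w.r.t. the homogenization variable `v0`): its projective zero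
locus over the algebraic closure is finite, and either it is empty or `X v0` is a nonzerodivisor
modulo the saturation `I^sat`. -/
def GenCoords {K : Type*} [Field K] {σ : Type*} (v0 : σ)
    (I : Ideal (MvPolynomial σ K)) : Prop :=
  (projZerosBar I).Finite ∧
    (projZerosBar I = ∅ ∨ ∀ f, X v0 * f ∈ maxSat I → f ∈ maxSat I)

/-- Homogenization of `f` with respect to a new variable `x_0` placed at index `0`; the original
variables are shifted along `Fin.succ`. -/
noncomputable def homogPoly {K : Type*} [CommSemiring K] {q : ℕ}
    (f : MvPolynomial (Fin q) K) : MvPolynomial (Fin (q + 1)) K :=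
  f.support.sum fun a =>
    monomial (Finsupp.single (0 : Fin (q + 1)) (f.totalDegree - expDeg a)
      + a.mapDomain Fin.succ) (f.coeff a)

/-- Dehomogenization: substitute `x_0 ↦ 1` and shift the remaining variables back. -/
noncomputable def dehomAlg {K : Type*} [Field K] (n : ℕ) :
    MvPolynomial (Fin (n + 1)) K →ₐ[K] MvPolynomial (Fin n) K :=
  aeval fun i => Fin.cases (1 : MvPolynomial (Fin n) K) (fun j => X j) i

/-- An ideal of a polynomial ring is homogeneous if it contains all homogeneous components of
its elements. -/
def IsHomogIdeal {σ K : Type*} [CommSemiring K] (I : Ideal (MvPolynomial σ K)) : Prop :=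
  ∀ f ∈ I, ∀ d : ℕ, MvPolynomial.homogeneousComponent d f ∈ I

/-- The highest degree homogeneous component `f^top` of a polynomial. -/
noncomputable def topComp {σ K : Type*} [CommSemiring K] (f : MvPolynomial σ K) :
    MvPolynomial σ K :=
  MvPolynomial.homogeneousComponent f.totalDegree f

/-! ### Keyed iterated polynomial systems -/

/-- The univariate keyed iterated polynomial system attached to the bivariate polynomials
`g_1, …, g_n` (with `n = m + 1`, indexed here by `k = 0, …, m`), the plaintext `p` and the
ciphertext `c`.  The ambient ring is `K[x_1, …, x_m, y]`, where `x_j` has variable index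
`j - 1` and `y` has variable index `m`; in the bivariate ring `K[x, y]`, `x` has index `0`
and `y` has index `1`.  Explicitly, `keyedF m g p c 0 = g 1 (p, y) - x 1`,
`keyedF m g p c k = g (k+1) (x k, y) - x (k+1)` for `1 ≤ k ≤ m - 1` and
`keyedF m g p c m = g (m+1) (x m, y) - c`. -/
noncomputable def keyedF {K : Type*} [Field K] (m : ℕ)
    (g : ℕ → MvPolynomial (Fin 2) K) (p c : K) (k : ℕ) :
    MvPolynomial (Fin (m + 1)) K :=
  aeval ![if k = 0 then C p else X (((k - 1 : ℕ)) : Fin (m + 1)),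
          X ((m : ℕ) : Fin (m + 1))] (g k)
    - (if k < m then X ((k : ℕ) : Fin (m + 1)) else C c)

/-- The chain `ĝ_1 = g_1(p, y)`, `ĝ_{k+1} = g_{k+1}(ĝ_k(y), y)` of univariate polynomials
(0-based indexing: `ghat g p k = ĝ_{k+1}`). -/
noncomputable def ghat {K : Type*} [Field K] (g : ℕ → MvPolynomial (Fin 2) K)
    (p : K) : ℕ → Polynomial K
  | 0 => aeval ![Polynomial.C p, Polynomial.X] (g 0)
  | (k + 1) => aeval ![ghat g p k, Polynomial.X] (g (k + 1))

/-- Embed a univariate polynomial into `K[x_1, …, x_m, y]` via the variable `y`. -/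
noncomputable def yPoly {K : Type*} [Field K] (m : ℕ) (q : Polynomial K) :
    MvPolynomial (Fin (m + 1)) K :=
  Polynomial.aeval (X ((m : ℕ) : Fin (m + 1))) q

/-- The (monic, up to a unit) greatest common divisor of two univariate polynomials over a
field. -/
noncomputable def polyGCD {K : Type*} [Field K] (f g : Polynomial K) : Polynomial K :=
  @EuclideanDomain.gcd _ _ (Classical.decEq _) f g

/-- The number of distinct roots of a univariate polynomial in the base field. -/
noncomputable def numRoots {K : Type*} [Field K] (f : Polynomial K) : ℕ :=
  letI := Classical.decEq K
  f.roots.toFinset.card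

/-! ### Feistel-2n/n keyed iterated polynomial systems -/

/-- The nonlinear ("left branch") polynomials of the keyed iterated polynomial system for
Feistel-`2n/n` (with `n = m + 1`, indexed here by `k = 0, …, m`).  The ambient ring is
`K[x_{L,1}, x_{R,1}, …, x_{L,m}, x_{R,m}, y]` where `x_{L,j}` has variable index `2(j-1)`,
`x_{R,j}` has variable index `2(j-1) + 1` and `y` has variable index `2m`. -/
noncomputable def fstL {K : Type*} [Field K] (m : ℕ) (g : ℕ → MvPolynomial (Fin 2) K)
    (pL pR cL : K) (k : ℕ) : MvPolynomial (Fin (2 * m + 1)) K :=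
  (if k = 0 then C pR else X (((2 * (k - 1) + 1 : ℕ)) : Fin (2 * m + 1)))
  + aeval ![if k = 0 then C pL else X (((2 * (k - 1) : ℕ)) : Fin (2 * m + 1)),
            X (((2 * m : ℕ)) : Fin (2 * m + 1))] (g k)
  - (if k < m then X (((2 * k : ℕ)) : Fin (2 * m + 1)) else C cL)

/-- The linear ("right branch") polynomials of the keyed iterated polynomial system for
Feistel-`2n/n` (same variable conventions as in `fstL`). -/
noncomputable def fstR {K : Type*} [Field K] (m : ℕ) (pL cR : K) (k : ℕ) :
    MvPolynomial (Fin (2 * m + 1)) K :=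
  (if k = 0 then C pL else X (((2 * (k - 1) : ℕ)) : Fin (2 * m + 1)))
  - (if k < m then X (((2 * k + 1 : ℕ)) : Fin (2 * m + 1)) else C cR)

/-- The downsized Feistel system `H = {f̃_1, …, f̃_n}` (with `n = m + 1`, indexed here by
`k = 0, …, m`), obtained by substituting the linear polynomials into the nonlinear ones.  The
ambient ring is `K[x_{R,2}, …, x_{R,m}, x_{L,m}, y]` where `x_{R,j}` has variable index
`j - 2`, `x_{L,m}` has variable index `m - 1` and `y` has variable index `m`. -/
noncomputable def hTil {K : Type*} [Field K] (m : ℕ) (g : ℕ → MvPolynomial (Fin 2) K)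
    (pL pR cL : K) (k : ℕ) : MvPolynomial (Fin (m + 1)) K :=
  (if k = 0 then C pR else if k = 1 then C pL else X (((k - 2 : ℕ)) : Fin (m + 1)))
  + aeval ![if k = 0 then C pL else X (((k - 1 : ℕ)) : Fin (m + 1)),
            X ((m : ℕ) : Fin (m + 1))] (g k)
  - (if k < m then X ((k : ℕ) : Fin (m + 1)) else C cL)

/-- The chain `ĥ_1 = p_R + g_1(p_L, y)`, `ĥ_2 = p_L + g_2(ĥ_1, y)`,
`ĥ_i = ĥ_{i-2} + g_i(ĥ_{i-1}, y)` of univariate polynomials (0-based indexing: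
`hHat g pL pR k = ĥ_{k+1}`). -/
noncomputable def hHat {K : Type*} [Field K] (g : ℕ → MvPolynomial (Fin 2) K)
    (pL pR : K) : ℕ → Polynomial K
  | 0 => Polynomial.C pR + aeval ![Polynomial.C pL, Polynomial.X] (g 0)
  | 1 => Polynomial.C pL + aeval ![hHat g pL pR 0, Polynomial.X] (g 1)
  | (k + 2) => hHat g pL pR k + aeval ![hHat g pL pR (k + 1), Polynomial.X] (g (k + 2))

/-! ### Two plain/ciphertext systems -/

/-- A univariate keyed iterated polynomial system placed inside the ring
`K[u_1, …, u_m, v_1, …, v_m, y]` (`u_j` has index `j - 1`, `v_j` has index `m + j - 1`, `y` has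
index `2m`), with the state variables offset by `off` (so `off = 0` uses the `u`-variables and
`off = m` the `v`-variables). -/
noncomputable def twoF {K : Type*} [Field K] (m : ℕ) (g : ℕ → MvPolynomial (Fin 2) K)
    (p c : K) (off : ℕ) (k : ℕ) : MvPolynomial (Fin (2 * m + 1)) K :=
  aeval ![if k = 0 then C p else X (((off + (k - 1) : ℕ)) : Fin (2 * m + 1)),
          X (((2 * m : ℕ)) : Fin (2 * m + 1))] (g k)
  - (if k < m then X (((off + k : ℕ)) : Fin (2 * m + 1)) else C c)

/-! ### Macaulay spaces, degree falls, last fall degree, satiety, degree of regularity -/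

/-- The row space `W_{F,d}` of the degree-`d` inhomogeneous Macaulay matrix of the system `F`:
all polynomials of the form `∑ gᵢ·fᵢ` with `deg (gᵢ·fᵢ) ≤ d` for every `i`. -/
def Wsp {σ K ι : Type*} [CommSemiring K] [Fintype ι]
    (F : ι → MvPolynomial σ K) (d : ℕ) : Set (MvPolynomial σ K) :=
  {f | ∃ g : ι → MvPolynomial σ K, f = ∑ i, g i * F i ∧ ∀ i, (g i * F i).totalDegree ≤ d}

/-- `d_f`: the least degree `d` with `f ∈ W_{F,d}`. -/
noncomputable def dfall {σ K ι : Type*} [CommSemiring K] [Fintype ι]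
    (F : ι → MvPolynomial σ K) (f : MvPolynomial σ K) : ℕ :=
  sInf {d : ℕ | f ∈ Wsp F d}

/-- The last fall degree `d_F ∈ ℕ ∪ {∞}`: the least `d` such that every `f` in the ideal
generated by `F` lies in `W_{F, max (d, deg f)}` (the value `∞` imposes no condition since
`W_{F,∞} = (F)`). -/
noncomputable def lastFall {σ K ι : Type*} [CommSemiring K] [Fintype ι]
    (F : ι → MvPolynomial σ K) : ℕ∞ :=
  sInf {d : ℕ∞ | ∀ e : ℕ, d = (e : ℕ∞) →
    ∀ f ∈ Ideal.span (Set.range F), f ∈ Wsp F (max e f.totalDegree)}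

/-- The satiety of a homogeneous ideal: the least `s` such that `I` and `I^sat` agree in all
degrees `l ≥ s`. -/
noncomputable def satiety {σ K : Type*} [Field K] (I : Ideal (MvPolynomial σ K)) : ℕ :=
  sInf {s : ℕ | ∀ l, s ≤ l → ∀ f : MvPolynomial σ K, f.IsHomogeneous l →
    (f ∈ I ↔ f ∈ maxSat I)}

/-- The degree of regularity `d_reg(F) ∈ ℕ ∪ {∞}` of a polynomial system: the least `d` such
that every homogeneous polynomial of degree `d` lies in the ideal generated by the highest
degree components `F^top`. -/
noncomputable def dregSys {σ K : Type*} [CommSemiring K] (F : Set (MvPolynomial σ K)) : ℕ∞ :=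
  sInf {e : ℕ∞ | ∃ d : ℕ, e = (d : ℕ∞) ∧ ∀ f : MvPolynomial σ K, f.IsHomogeneous d →
    f ∈ Ideal.span (topComp '' F)}

section Aux
variable {K : Type*} [Field K] {n : ℕ}

/-- exponent embedding -/
noncomputable def eD {n : ℕ} (D : ℕ) (a : Fin n →₀ ℕ) : Fin (n + 1) →₀ ℕ :=
  Finsupp.single 0 (D - expDeg a) + a.mapDomain Fin.succ

/-- homogenize to degree `D` -/
noncomputable def Hd {K : Type*} [CommSemiring K] {n : ℕ} (D : ℕ)
    (p : MvPolynomial (Fin n) K) : MvPolynomial (Fin (n + 1)) K :=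
  p.support.sum fun a => monomial (eD D a) (p.coeff a)

lemma homogPoly_eq_Hd (p : MvPolynomial (Fin n) K) : homogPoly p = Hd p.totalDegree p := rfl

lemma expDeg_add (a b : Fin n →₀ ℕ) : expDeg (a + b) = expDeg a + expDeg b := by
  classical
  exact Finsupp.sum_add_index' (fun _ => rfl) (fun _ _ _ => rfl)

lemma expDeg_single (i : Fin n) (k : ℕ) : expDeg (Finsupp.single i k) = k := by
  classical
  exact Finsupp.sum_single_index rfl

lemma expDeg_mapDomain (a : Fin n →₀ ℕ) :
    expDeg (a.mapDomain (Fin.succ)) = expDeg a := by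
  classical
  exact Finsupp.sum_mapDomain_index (fun _ => rfl) (fun _ _ _ => rfl)

lemma expDeg_le_totalDegree {p : MvPolynomial (Fin n) K} {a : Fin n →₀ ℕ}
    (h : a ∈ p.support) : expDeg a ≤ p.totalDegree := le_totalDegree h

end Aux

section Aux2
variable {K : Type*} [Field K] {n : ℕ}

lemma Hd_sum_subset (D : ℕ) (p : MvPolynomial (Fin n) K) {s : Finset (Fin n →₀ ℕ)}
    (h : p.support ⊆ s) :
    Hd D p = ∑ a ∈ s, monomial (eD D a) (p.coeff a) := by
  classical
  rw [Hd]
  refine Finset.sum_subset h ?_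
  intro x _ hx
  rw [MvPolynomial.notMem_support_iff.mp hx, map_zero]

lemma Hd_add (D : ℕ) (p q : MvPolynomial (Fin n) K) :
    Hd D (p + q) = Hd D p + Hd D q := by
  classical
  rw [Hd_sum_subset D (p + q) (s := p.support ∪ q.support)
      (MvPolynomial.support_add ..),
    Hd_sum_subset D p (s := p.support ∪ q.support) Finset.subset_union_left,
    Hd_sum_subset D q (s := p.support ∪ q.support) Finset.subset_union_right,
    ← Finset.sum_add_distrib]
  refine Finset.sum_congr rfl fun a _ => ?_
  rw [coeff_add, map_add]

lemma Hd_zero (D : ℕ) : Hd D (0 : MvPolynomial (Fin n) K) = 0 := by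
  simp [Hd]

lemma Hd_finsetSum (D : ℕ) {ι : Type*} (s : Finset ι) (f : ι → MvPolynomial (Fin n) K) :
    Hd D (∑ i ∈ s, f i) = ∑ i ∈ s, Hd D (f i) := by
  classical
  induction s using Finset.induction with
  | empty => simp [Hd_zero]
  | insert _ _ h ih => rw [Finset.sum_insert h, Finset.sum_insert h, Hd_add, ih]

lemma Hd_monomial (D : ℕ) (a : Fin n →₀ ℕ) (c : K) :
    Hd D (monomial a c) = monomial (eD D a) c := by
  classical
  by_cases hc : c = 0
  · simp [hc, Hd_zero]
  · rw [Hd, MvPolynomial.support_monomial, if_neg hc, Finset.sum_singleton,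
      MvPolynomial.coeff_monomial, if_pos rfl]

lemma Hd_shift (D E : ℕ) (p : MvPolynomial (Fin n) K) (hE : p.totalDegree ≤ E)
    (hDE : E ≤ D) : Hd D p = X 0 ^ (D - E) * Hd E p := by
  classical
  rw [Hd, Hd, Finset.mul_sum]
  refine Finset.sum_congr rfl fun a ha => ?_
  have h1 : expDeg a ≤ E := le_trans (expDeg_le_totalDegree ha) hE
  rw [X_pow_eq_monomial, monomial_mul, one_mul]
  congr 1
  have h2 : (D - E) + (E - expDeg a) = D - expDeg a := by omega
  rw [eD, eD, ← add_assoc, ← Finsupp.single_add, h2]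

end Aux2

section Aux3
variable {K : Type*} [Field K] {n : ℕ}

/-- restriction of exponents, dropping `x_0` -/
noncomputable def resF {n : ℕ} (a : Fin (n + 1) →₀ ℕ) : Fin n →₀ ℕ :=
  Finsupp.comapDomain Fin.succ a (Fin.succ_injective n).injOn

lemma resF_apply (a : Fin (n + 1) →₀ ℕ) (j : Fin n) : resF a j = a j.succ := rfl

lemma resF_decomp (a : Fin (n + 1) →₀ ℕ) :
    a = Finsupp.single 0 (a 0) + (resF a).mapDomain Fin.succ := by
  classical
  ext i
  induction i using Fin.cases with
  | zero =>
    rw [Finsupp.add_apply, Finsupp.single_eq_same,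
      Finsupp.mapDomain_notin_range _ _ (by simp [Set.range, Fin.succ_ne_zero]),
      add_zero]
  | succ j =>
    rw [Finsupp.add_apply, Finsupp.single_eq_of_ne' (Fin.succ_ne_zero j).symm,
      Finsupp.mapDomain_apply (Fin.succ_injective n), resF_apply, zero_add]

lemma expDeg_resF (a : Fin (n + 1) →₀ ℕ) : expDeg a = a 0 + expDeg (resF a) := by
  conv_lhs => rw [resF_decomp a]
  rw [expDeg_add, expDeg_single, expDeg_mapDomain]

lemma deh_X0_aux : dehomAlg (K := K) n (X 0) = 1 := by
  rw [dehomAlg, aeval_X, Fin.cases_zero]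

lemma deh_rename (p : MvPolynomial (Fin n) K) :
    dehomAlg n (MvPolynomial.rename Fin.succ p) = p := by
  rw [dehomAlg, aeval_rename]
  have h : ((fun i => Fin.cases (1 : MvPolynomial (Fin n) K) (fun j => X j) i) ∘ Fin.succ)
      = fun j => (X j : MvPolynomial (Fin n) K) := by
    funext j; simp [Function.comp]
  rw [h]
  exact aeval_X_left_apply p

lemma deh_C (c : K) : dehomAlg (K := K) n (C c) = C c := by
  rw [dehomAlg, aeval_C, algebraMap_eq]

lemma deh_monomial (a : Fin (n + 1) →₀ ℕ) (c : K) :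
    dehomAlg n (monomial a c) = monomial (resF a) c := by
  have hdec : (monomial a c : MvPolynomial (Fin (n + 1)) K)
      = C c * X 0 ^ (a 0) * MvPolynomial.rename Fin.succ (monomial (resF a) 1) := by
    rw [rename_monomial, C_mul_X_pow_eq_monomial, monomial_mul, mul_one, ← resF_decomp a]
  rw [hdec, map_mul, map_mul, map_pow, deh_X0_aux, deh_rename, deh_C, one_pow, mul_one,
    C_mul_monomial, mul_one]

lemma deh_X0 : dehomAlg (K := K) n (X 0) = 1 := deh_X0_aux

lemma deh_surjective : Function.Surjective (dehomAlg (K := K) n) :=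
  fun p => ⟨MvPolynomial.rename Fin.succ p, deh_rename p⟩

lemma totalDegree_monomial_le' (a : Fin n →₀ ℕ) (c : K) :
    (monomial a c).totalDegree ≤ expDeg a := by
  classical
  by_cases hc : c = 0
  · simp [hc]
  · rw [MvPolynomial.totalDegree_monomial a hc]; rfl

lemma deh_totalDegree_le (F : MvPolynomial (Fin (n + 1)) K) :
    (dehomAlg n F).totalDegree ≤ F.totalDegree := by
  classical
  conv_lhs => rw [← support_sum_monomial_coeff F]
  rw [map_sum]
  refine le_trans (MvPolynomial.totalDegree_finset_sum _ _) ?_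
  refine Finset.sup_le fun a ha => ?_
  rw [deh_monomial]
  refine le_trans (totalDegree_monomial_le' _ _) ?_
  have := expDeg_resF a
  have h2 := le_totalDegree (p := F) ha
  have h3 : expDeg a ≤ F.totalDegree := h2
  omega

lemma isHomogeneous_expDeg {F : MvPolynomial (Fin (n + 1)) K} {D : ℕ}
    (hF : F.IsHomogeneous D) {a : Fin (n + 1) →₀ ℕ} (ha : a ∈ F.support) :
    expDeg a = D := by
  have := hF (MvPolynomial.mem_support_iff.mp ha)
  replace this : Finsupp.degree a = D := by rw [Finsupp.degree_eq_weight_one]; exact this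
  exact this

lemma Hd_deh_homogeneous {F : MvPolynomial (Fin (n + 1)) K} {D : ℕ}
    (hF : F.IsHomogeneous D) : Hd D (dehomAlg n F) = F := by
  classical
  conv_lhs => rw [← support_sum_monomial_coeff F]
  rw [map_sum, Hd_finsetSum]
  conv_rhs => rw [← support_sum_monomial_coeff F]
  refine Finset.sum_congr rfl fun a ha => ?_
  rw [deh_monomial, Hd_monomial]
  congr 1
  have hdeg : expDeg a = D := isHomogeneous_expDeg hF ha
  have hres := expDeg_resF a
  have hval : D - expDeg (resF a) = a 0 := by omega
  rw [eD, hval, ← resF_decomp a]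

end Aux3


section Aux4
variable {K : Type*} [Field K] {n : ℕ}

/-- The saturation of `I` by the single variable `x_0`, as an ideal. -/
noncomputable def satX0 (I : Ideal (MvPolynomial (Fin (n + 1)) K)) :
    Ideal (MvPolynomial (Fin (n + 1)) K) where
  carrier := {f | ∃ k, X 0 ^ k * f ∈ I}
  add_mem' := by
    rintro a b ⟨k, hk⟩ ⟨l, hl⟩
    refine ⟨k + l, ?_⟩
    have h := I.add_mem (I.mul_mem_left (X 0 ^ l) hk) (I.mul_mem_left (X 0 ^ k) hl)
    convert h using 1
    ring
  zero_mem' := ⟨0, by simpa using I.zero_mem⟩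
  smul_mem' := by
    rintro c f ⟨k, hk⟩
    refine ⟨k, ?_⟩
    rw [smul_eq_mul, mul_left_comm]
    exact I.mul_mem_left c hk

lemma mem_satX0 {I : Ideal (MvPolynomial (Fin (n + 1)) K)} {f : MvPolynomial (Fin (n + 1)) K} :
    f ∈ satX0 I ↔ ∃ k, X 0 ^ k * f ∈ I := Iff.rfl

/-- Key lemma 1: for `f ∈ I`, a suitable `x_0`-power times the homogenization of the
dehomogenization of `f` is in `I`. -/
lemma L1 {I : Ideal (MvPolynomial (Fin (n + 1)) K)} (hhom : IsHomogIdeal I)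
    {f : MvPolynomial (Fin (n + 1)) K} (hf : f ∈ I) :
    X 0 ^ (f.totalDegree - (dehomAlg n f).totalDegree) * homogPoly (dehomAlg n f) ∈ I := by
  classical
  rw [homogPoly_eq_Hd, ← Hd_shift f.totalDegree (dehomAlg n f).totalDegree _ (le_refl _)
    (deh_totalDegree_le f)]
  have hsum : Hd f.totalDegree (dehomAlg n f)
      = ∑ d ∈ Finset.range (f.totalDegree + 1),
          X 0 ^ (f.totalDegree - d) * MvPolynomial.homogeneousComponent d f := by
    have hf' : dehomAlg n f = ∑ d ∈ Finset.range (f.totalDegree + 1),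
        dehomAlg n (MvPolynomial.homogeneousComponent d f) := by
      conv_lhs => rw [← MvPolynomial.sum_homogeneousComponent f]
      rw [map_sum]
    rw [hf', Hd_finsetSum]
    refine Finset.sum_congr rfl fun d hd => ?_
    have hd' : d ≤ f.totalDegree := by
      have := Finset.mem_range.mp hd; omega
    have hcomp := MvPolynomial.homogeneousComponent_isHomogeneous d f
    rw [Hd_shift f.totalDegree d _ (le_trans (deh_totalDegree_le _) hcomp.totalDegree_le) hd',
      Hd_deh_homogeneous hcomp]
  rw [hsum]
  exact Ideal.sum_mem I fun d _ => I.mul_mem_left _ (hhom f hf d)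

/-- homogeneous components of elements of `satX0 I` are in `satX0 I` -/
lemma comp_mem_satX0 {I : Ideal (MvPolynomial (Fin (n + 1)) K)} (hhom : IsHomogIdeal I)
    {f : MvPolynomial (Fin (n + 1)) K} {k : ℕ} (hk : X 0 ^ k * f ∈ I) (d : ℕ) :
    X 0 ^ k * MvPolynomial.homogeneousComponent d f ∈ I := by
  classical
  by_cases hd : d ≤ f.totalDegree
  · have key : X 0 ^ k * MvPolynomial.homogeneousComponent d f
        = MvPolynomial.homogeneousComponent (k + d) (X 0 ^ k * f) := by
      conv_rhs => rw [← MvPolynomial.sum_homogeneousComponent f]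
      rw [Finset.mul_sum, map_sum]
      have heach : ∀ e ∈ Finset.range (f.totalDegree + 1),
          MvPolynomial.homogeneousComponent (k + d) (X 0 ^ k * MvPolynomial.homogeneousComponent e f)
            = if d = e then X 0 ^ k * MvPolynomial.homogeneousComponent e f else 0 := by
        intro e _
        have hmem : X 0 ^ k * MvPolynomial.homogeneousComponent e f
            ∈ MvPolynomial.homogeneousSubmodule (Fin (n + 1)) K (k + e) := by
          rw [MvPolynomial.mem_homogeneousSubmodule]
          have hx : (X 0 ^ k : MvPolynomial (Fin (n + 1)) K).IsHomogeneous k := by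
            simpa using (MvPolynomial.isHomogeneous_X K (0 : Fin (n + 1))).pow k
          exact hx.mul (MvPolynomial.homogeneousComponent_isHomogeneous e f)
        rw [MvPolynomial.homogeneousComponent_of_mem hmem]
        congr 1
        simp only [eq_iff_iff]
        omega
      rw [Finset.sum_congr rfl heach, Finset.sum_ite_eq (Finset.range (f.totalDegree + 1)) d
        (fun e => X 0 ^ k * MvPolynomial.homogeneousComponent e f),
        if_pos (Finset.mem_range.mpr (by omega))]
    rw [key]
    exact hhom _ hk _
  · have h0 : MvPolynomial.homogeneousComponent d f = 0 :=
      MvPolynomial.homogeneousComponent_eq_zero d f (by omega)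
    rw [h0, mul_zero]
    exact I.zero_mem

end Aux4

section Aux5
variable {K : Type*} [Field K] {n : ℕ}

/-- Lemma A: the homogenization of the dehomogenization of a homogeneous ideal `I` is the
saturation of `I` with respect to `x_0`. -/
lemma lemA {I : Ideal (MvPolynomial (Fin (n + 1)) K)} (hhom : IsHomogIdeal I) :
    Ideal.span (homogPoly ''
        ((Ideal.map (dehomAlg (K := K) n) I : Ideal (MvPolynomial (Fin n) K)) :
          Set (MvPolynomial (Fin n) K))) = satX0 I := by
  classical
  apply le_antisymm
  · rw [Ideal.span_le]
    rintro x ⟨g, hg, rfl⟩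
    obtain ⟨f, hfI, rfl⟩ := (Ideal.mem_map_iff_of_surjective _ deh_surjective).mp hg
    exact mem_satX0.mpr ⟨_, L1 hhom hfI⟩
  · intro f hf
    obtain ⟨k, hk⟩ := mem_satX0.mp hf
    rw [← MvPolynomial.sum_homogeneousComponent f]
    refine Ideal.sum_mem _ fun d _ => ?_
    have hFk : X 0 ^ k * MvPolynomial.homogeneousComponent d f ∈ I :=
      comp_mem_satX0 hhom hk d
    have hp : dehomAlg n (MvPolynomial.homogeneousComponent d f)
        ∈ Ideal.map (dehomAlg (K := K) n) I := by
      have h1 := Ideal.mem_map_of_mem (dehomAlg (K := K) n) hFk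
      rwa [map_mul, map_pow, deh_X0, one_pow, one_mul] at h1
    have hFh := MvPolynomial.homogeneousComponent_isHomogeneous d f
    have hdegp : (dehomAlg n (MvPolynomial.homogeneousComponent d f)).totalDegree ≤ d :=
      le_trans (deh_totalDegree_le _) hFh.totalDegree_le
    have key : MvPolynomial.homogeneousComponent d f
        = X 0 ^ (d - (dehomAlg n (MvPolynomial.homogeneousComponent d f)).totalDegree)
          * homogPoly (dehomAlg n (MvPolynomial.homogeneousComponent d f)) := by
      rw [homogPoly_eq_Hd, ← Hd_shift d _ _ (le_refl _) hdegp, Hd_deh_homogeneous hFh]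
    rw [key]
    exact Ideal.mul_mem_left _ _ (Ideal.subset_span ⟨_, hp, rfl⟩)

lemma maxSat_exists {I : Ideal (MvPolynomial (Fin (n + 1)) K)}
    {f : MvPolynomial (Fin (n + 1)) K} (h : f ∈ maxSat I) : ∃ k, X 0 ^ k * f ∈ I := by
  have hmono : Monotone fun k : ℕ => Submodule.colon I
      (((Ideal.span (Set.range (X : Fin (n + 1) → MvPolynomial (Fin (n + 1)) K))) ^ k :
        Ideal (MvPolynomial (Fin (n + 1)) K)) : Set (MvPolynomial (Fin (n + 1)) K)) := by
    intro k l hkl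
    exact Submodule.colon_mono (le_refl I) (Ideal.pow_le_pow_right hkl)
  rw [maxSat] at h
  obtain ⟨k, hk⟩ := (Submodule.mem_iSup_of_directed _ hmono.directed_le).mp h
  have hx : (X (0 : Fin (n + 1)) : MvPolynomial (Fin (n + 1)) K) ^ k
      ∈ (Ideal.span (Set.range (X : Fin (n + 1) → MvPolynomial (Fin (n + 1)) K))) ^ k :=
    Ideal.pow_mem_pow (Ideal.subset_span (Set.mem_range_self 0)) k
  have h2 := Submodule.mem_colon.mp hk _ hx
  rw [smul_eq_mul] at h2
  exact ⟨k, by rwa [mul_comm]⟩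

lemma le_maxSat (I : Ideal (MvPolynomial (Fin (n + 1)) K)) : I ≤ maxSat I := by
  intro f hf
  have h0 : f ∈ Submodule.colon I
      (((Ideal.span (Set.range (X : Fin (n + 1) → MvPolynomial (Fin (n + 1)) K))) ^ 0 :
        Ideal (MvPolynomial (Fin (n + 1)) K)) : Set (MvPolynomial (Fin (n + 1)) K)) :=
    Submodule.mem_colon.mpr fun p _ => by
      rw [smul_eq_mul]; exact I.mul_mem_right p hf
  exact (le_iSup (fun k => Submodule.colon I
    (((Ideal.span (Set.range (X : Fin (n + 1) → MvPolynomial (Fin (n + 1)) K))) ^ k :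
      Ideal (MvPolynomial (Fin (n + 1)) K)) : Set (MvPolynomial (Fin (n + 1)) K))) 0) h0

lemma pulldown {I : Ideal (MvPolynomial (Fin (n + 1)) K)}
    (hG : ∀ f, X 0 * f ∈ maxSat I → f ∈ maxSat I) :
    ∀ (k : ℕ) (f : MvPolynomial (Fin (n + 1)) K), X 0 ^ k * f ∈ I → f ∈ maxSat I := by
  intro k
  induction k with
  | zero => intro f h; rw [pow_zero, one_mul] at h; exact le_maxSat I h
  | succ k ih =>
    intro f h
    apply hG
    apply ih
    rw [← mul_assoc, ← pow_succ]
    exact h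

end Aux5

/-- For an infinite field `K` and a homogeneous ideal `I ⊆ K[x_0, …, x_n]`
whose projective zero locus over the algebraic closure is nonempty and finite, `I` is in
generic coordinates iff `I^sat = (I^deh)^h`. -/
theorem stmt_1 {K : Type*} [Field K] [Infinite K] (n : ℕ)
    (I : Ideal (MvPolynomial (Fin (n + 1)) K))
    (hhom : IsHomogIdeal I)
    (hne : (projZerosBar I).Nonempty)
    (hfin : (projZerosBar I).Finite) :
    GenCoords (0 : Fin (n + 1)) I ↔
      maxSat I = Ideal.span (homogPoly ''
        ((Ideal.map (dehomAlg (K := K) n) I : Ideal (MvPolynomial (Fin n) K)) :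
          Set (MvPolynomial (Fin n) K))) := by
  constructor
  · rintro ⟨-, hG⟩
    rcases hG with h | hG
    · exact absurd h hne.ne_empty
    rw [lemA hhom]
    apply le_antisymm
    · intro f hf
      exact mem_satX0.mpr (maxSat_exists hf)
    · intro f hf
      obtain ⟨k, hk⟩ := mem_satX0.mp hf
      exact pulldown hG k f hk
  · intro hEq
    refine ⟨hfin, Or.inr fun f hf => ?_⟩
    rw [hEq, lemA hhom] at hf
    obtain ⟨k, hk⟩ := mem_satX0.mp hf
    rw [hEq, lemA hhom]
    exact mem_satX0.mpr ⟨k + 1, by rw [pow_succ, mul_assoc]; exact hk⟩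
end

section
/- Let K be an algebraically closed field and let F = {f_1,…,f_m} ⊆ K[x_1,…,x_n] be a polynomial system such that (F) ≠ (1) and the ideal (F) is zero-dimensional. Then for every Gröbner basis G of the ideal (F) with respect to the degree reverse lexicographic order, the homogenized ideal (G^h), generated by the homogenizations of the elements of G, is in generic coordinates. -/
open MvPolynomial
open Fin.NatCast

namespace Stmt3Aux

abbrev drl {N : ℕ} : (Fin N →₀ ℕ) → (Fin N →₀ ℕ) → Prop := drlLT sigDes

lemma expDeg_eq_sum {N : ℕ} (a : Fin N →₀ ℕ) : expDeg a = ∑ i, a i :=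
  Finsupp.sum_fintype _ _ (fun _ => rfl)

lemma expDeg_add {σ : Type*} (a b : σ →₀ ℕ) : expDeg (a + b) = expDeg a + expDeg b :=
  Finsupp.sum_add_index' (fun _ => rfl) (fun _ _ _ => rfl)

lemma expDeg_single {σ : Type*} (i : σ) (k : ℕ) : expDeg (Finsupp.single i k) = k :=
  Finsupp.sum_single_index rfl

lemma expDeg_mapSucc {n : ℕ} (a : Fin n →₀ ℕ) :
    expDeg (a.mapDomain Fin.succ) = expDeg a :=
  Finsupp.sum_mapDomain_index (fun _ => rfl) (fun _ _ _ => rfl)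

lemma apply_le_expDeg {N : ℕ} (a : Fin N →₀ ℕ) (i : Fin N) : a i ≤ expDeg a := by
  rw [expDeg_eq_sum]
  exact Finset.single_le_sum (f := fun j => a j) (fun j _ => Nat.zero_le _) (Finset.mem_univ i)

lemma pair_le_expDeg {N : ℕ} (a : Fin N →₀ ℕ) {i l : Fin N} (h : i ≠ l) :
    a i + a l ≤ expDeg a := by
  rw [expDeg_eq_sum]
  have : ∑ j ∈ ({i, l} : Finset (Fin N)), a j = a i + a l := Finset.sum_pair h
  rw [← this]
  exact Finset.sum_le_sum_of_subset (Finset.subset_univ _)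

lemma expDeg_tsub_add {N : ℕ} {a b : Fin N →₀ ℕ} (h : b ≤ a) :
    expDeg (a - b) + expDeg b = expDeg a := by
  rw [← expDeg_add, tsub_add_cancel_of_le h]

lemma drl_of_deg_lt {N : ℕ} {a b : Fin N →₀ ℕ} (h : expDeg a < expDeg b) : drl a b :=
  Or.inl h

lemma expDeg_le_of_drl {N : ℕ} {a b : Fin N →₀ ℕ} (h : drl a b) :
    expDeg a ≤ expDeg b := by
  rcases h with h | ⟨h, _⟩
  · omega
  · omega

lemma drl_irrefl {N : ℕ} (a : Fin N →₀ ℕ) : ¬ drl a a := by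
  rintro (h | ⟨_, i, hi, _⟩)
  · omega
  · omega

lemma drl_total {N : ℕ} {a b : Fin N →₀ ℕ} (h : a ≠ b) : drl a b ∨ drl b a := by
  rcases lt_trichotomy (expDeg a) (expDeg b) with hd | hd | hd
  · exact Or.inl (Or.inl hd)
  · have hne : ∃ i, a i ≠ b i := by
      by_contra hc
      push_neg at hc
      exact h (Finsupp.ext hc)
    set s : Finset (Fin N) := Finset.univ.filter (fun i => a i ≠ b i) with hs
    have hsne : s.Nonempty := by
      obtain ⟨i, hi⟩ := hne
      exact ⟨i, by simp [hs, hi]⟩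
    set i := s.max' hsne with hidef
    have hmem : a i ≠ b i := by
      have := s.max'_mem hsne
      simpa [hs] using this
    have htail : ∀ j, i < j → a j = b j := by
      intro j hj
      by_contra hc
      have : j ∈ s := by simp [hs, hc]
      have := s.le_max' j this
      omega
    rcases lt_or_gt_of_ne hmem with hlt | hgt
    · exact Or.inr (Or.inr ⟨hd.symm, i, hlt, fun j hj => (htail j hj).symm⟩)
    · exact Or.inl (Or.inr ⟨hd, i, hgt, fun j hj => htail j hj⟩)
  · exact Or.inr (Or.inl hd)

lemma drl_trans {N : ℕ} {a b c : Fin N →₀ ℕ} (h1 : drl a b) (h2 : drl b c) : drl a c := by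
  rcases h1 with h1 | ⟨h1, i, hi, hti⟩
  · rcases h2 with h2 | ⟨h2, _⟩
    · exact Or.inl (by omega)
    · exact Or.inl (by omega)
  · rcases h2 with h2 | ⟨h2, i', hi', hti'⟩
    · exact Or.inl (by omega)
    · refine Or.inr ⟨by omega, ?_⟩
      rcases lt_trichotomy i i' with hii | hii | hii
      · exact ⟨i', by rw [← hti i' hii] at hi'; exact hi',
          fun j hj => (hti j (lt_trans hii hj)).trans (hti' j hj)⟩
      · subst hii
        exact ⟨i, by omega, fun j hj => (hti j hj).trans (hti' j hj)⟩
      · exact ⟨i, by rw [← hti' i hii]; exact hi,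
          fun j hj => (hti j hj).trans (hti' j (lt_trans hii hj))⟩

/-- The monotone embedding of DRL into a lexicographic product. -/
def psiDRL {N : ℕ} (a : Fin N →₀ ℕ) : Fin (N + 1) → ℕ := fun k =>
  ∑ j ∈ Finset.univ.filter (fun j : Fin N => (j : ℕ) < N - (k : ℕ)), a j

lemma psiDRL_zero {N : ℕ} (a : Fin N →₀ ℕ) : psiDRL a 0 = expDeg a := by
  rw [expDeg_eq_sum, psiDRL]
  apply Finset.sum_congr
  · ext j
    simp [Fin.is_lt j]
  · intros; rfl

lemma psiDRL_compl {N : ℕ} (a : Fin N →₀ ℕ) (k : Fin (N + 1)) :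
    psiDRL a k + ∑ j ∈ Finset.univ.filter (fun j : Fin N => ¬ ((j : ℕ) < N - (k : ℕ))), a j
      = expDeg a := by
  rw [expDeg_eq_sum, psiDRL]
  exact Finset.sum_filter_add_sum_filter_not _ _ _

lemma drl_psi_lex {N : ℕ} {a b : Fin N →₀ ℕ} (h : drl a b) :
    Pi.Lex (· < ·) (· < ·) (psiDRL a) (psiDRL b) := by
  rcases h with h | ⟨hdeg, i, hbi, htail⟩
  · exact ⟨0, fun j hj => absurd hj (by simp [Fin.lt_def]), by
      rw [psiDRL_zero, psiDRL_zero]; exact h⟩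
  · have hiN : (i : ℕ) < N := i.is_lt
    set k0 : Fin (N + 1) := ⟨N - (i : ℕ), by omega⟩ with hk0
    refine ⟨k0, ?_, ?_⟩
    · intro l hl
      have hl' : (l : ℕ) < N - (i : ℕ) := hl
      have hcompl_a := psiDRL_compl a l
      have hcompl_b := psiDRL_compl b l
      have hS : ∑ j ∈ Finset.univ.filter (fun j : Fin N => ¬ ((j : ℕ) < N - (l : ℕ))), a j
          = ∑ j ∈ Finset.univ.filter (fun j : Fin N => ¬ ((j : ℕ) < N - (l : ℕ))), b j := by
        apply Finset.sum_congr rfl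
        intro j hj
        simp only [Finset.mem_filter] at hj
        apply htail
        show i < j
        rw [Fin.lt_def]
        omega
      rw [hS] at hcompl_a
      show psiDRL a l = psiDRL b l
      omega
    · show psiDRL a k0 < psiDRL b k0
      have hk : (k0 : ℕ) = N - (i : ℕ) := rfl
      have hNi : N - (N - (i : ℕ)) = (i : ℕ) := by omega
      have hcompl_a := psiDRL_compl a k0
      have hcompl_b := psiDRL_compl b k0
      rw [hk, hNi] at hcompl_a hcompl_b
      have hsplit : ∀ c : Fin N →₀ ℕ,
          ∑ j ∈ Finset.univ.filter (fun j : Fin N => ¬ ((j : ℕ) < (i : ℕ))), c j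
            = c i + ∑ j ∈ (Finset.univ.filter
                (fun j : Fin N => ¬ ((j : ℕ) < (i : ℕ)))).erase i, c j := by
        intro c
        rw [Finset.add_sum_erase]
        simp
      have hTa := hsplit a
      have hTb := hsplit b
      have hT : ∑ j ∈ (Finset.univ.filter
            (fun j : Fin N => ¬ ((j : ℕ) < (i : ℕ)))).erase i, a j
          = ∑ j ∈ (Finset.univ.filter
            (fun j : Fin N => ¬ ((j : ℕ) < (i : ℕ)))).erase i, b j := by
        apply Finset.sum_congr rfl
        intro j hj
        simp only [Finset.mem_erase, Finset.mem_filter] at hj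
        apply htail
        show i < j
        rw [Fin.lt_def]
        have hne : (j : ℕ) ≠ (i : ℕ) := fun hc => hj.1 (Fin.ext hc)
        omega
      omega

lemma drl_wf {N : ℕ} : WellFounded (drl (N := N)) := by
  have hwf : WellFounded (Pi.Lex (· < ·) (· < ·) :
      (Fin (N + 1) → ℕ) → (Fin (N + 1) → ℕ) → Prop) :=
    Pi.Lex.wellFounded (· < ·) (fun _ => wellFounded_lt)
  exact Subrelation.wf (fun {a b} h => drl_psi_lex h) (InvImage.wf psiDRL hwf)



/-! ### Homogenization to a fixed degree -/

noncomputable def eH {n : ℕ} (d : ℕ) (a : Fin n →₀ ℕ) : Fin (n + 1) →₀ ℕ :=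
  Finsupp.single 0 (d - expDeg a) + a.mapDomain Fin.succ

variable {K : Type*} [Field K] {n : ℕ}

noncomputable def Hd (d : ℕ) (f : MvPolynomial (Fin n) K) : MvPolynomial (Fin (n + 1)) K :=
  f.support.sum fun a => monomial (eH d a) (f.coeff a)

lemma homogPoly_eq_Hd (f : MvPolynomial (Fin n) K) : homogPoly f = Hd f.totalDegree f := rfl

lemma eH_apply_zero {d : ℕ} (a : Fin n →₀ ℕ) : eH d a 0 = d - expDeg a := by
  rw [eH, Finsupp.add_apply, Finsupp.single_eq_same,
    Finsupp.mapDomain_notin_range _ _ (by simp [Fin.succ_ne_zero]), add_zero]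

lemma eH_apply_succ {d : ℕ} (a : Fin n →₀ ℕ) (j : Fin n) : eH d a j.succ = a j := by
  rw [eH, Finsupp.add_apply, Finsupp.single_eq_of_ne' (Fin.succ_ne_zero j).symm,
    Finsupp.mapDomain_apply (Fin.succ_injective n), zero_add]

lemma expDeg_eH {d : ℕ} {a : Fin n →₀ ℕ} (h : expDeg a ≤ d) : expDeg (eH d a) = d := by
  rw [eH, expDeg_add, expDeg_single, expDeg_mapSucc]
  omega

noncomputable def comapSucc (b : Fin (n + 1) →₀ ℕ) : Fin n →₀ ℕ :=
  Finsupp.equivFunOnFinite.symm (fun j => b j.succ)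

lemma comapSucc_apply (b : Fin (n + 1) →₀ ℕ) (j : Fin n) : comapSucc b j = b j.succ := rfl

lemma comapSucc_eH {d : ℕ} (a : Fin n →₀ ℕ) : comapSucc (eH d a) = a := by
  ext j
  rw [comapSucc_apply, eH_apply_succ]

lemma expDeg_comapSucc (b : Fin (n + 1) →₀ ℕ) : expDeg b = b 0 + expDeg (comapSucc b) := by
  rw [expDeg_eq_sum, expDeg_eq_sum, Fin.sum_univ_succ]
  simp [comapSucc_apply]

lemma eH_comapSucc (b : Fin (n + 1) →₀ ℕ) : eH (expDeg b) (comapSucc b) = b := by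
  ext i
  induction i using Fin.cases with
  | zero =>
      rw [eH_apply_zero]
      have := expDeg_comapSucc b
      omega
  | succ j => rw [eH_apply_succ, comapSucc_apply]

lemma Hd_eq_sum_superset {d : ℕ} {f : MvPolynomial (Fin n) K} {s : Finset (Fin n →₀ ℕ)}
    (hs : f.support ⊆ s) :
    Hd d f = ∑ a ∈ s, monomial (eH d a) (f.coeff a) := by
  rw [Hd]
  apply Finset.sum_subset hs
  intro a _ ha
  rw [notMem_support_iff.mp ha, map_zero]

lemma Hd_zero {d : ℕ} : Hd d (0 : MvPolynomial (Fin n) K) = 0 := by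
  simp [Hd]

lemma Hd_add {d : ℕ} (f g : MvPolynomial (Fin n) K) :
    Hd d (f + g) = Hd d f + Hd d g := by
  rw [Hd_eq_sum_superset (s := f.support ∪ g.support)
      (MvPolynomial.support_add (p := f) (q := g)),
    Hd_eq_sum_superset (s := f.support ∪ g.support) Finset.subset_union_left,
    Hd_eq_sum_superset (s := f.support ∪ g.support) Finset.subset_union_right,
    ← Finset.sum_add_distrib]
  apply Finset.sum_congr rfl
  intro a _
  rw [coeff_add, map_add]

lemma Hd_finsetSum {ι : Type*} (s : Finset ι) (F : ι → MvPolynomial (Fin n) K) (d : ℕ) :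
    Hd d (∑ i ∈ s, F i) = ∑ i ∈ s, Hd d (F i) := by
  classical
  induction s using Finset.induction_on with
  | empty => simp [Hd_zero]
  | insert _ _ h ih => rw [Finset.sum_insert h, Finset.sum_insert h, Hd_add, ih]

lemma Hd_monomial {d : ℕ} (b : Fin n →₀ ℕ) (c : K) :
    Hd d (monomial b c) = monomial (eH d b) c := by
  classical
  by_cases hc : c = 0
  · simp [hc, Hd_zero]
  · rw [Hd, support_monomial, if_neg hc, Finset.sum_singleton, coeff_monomial, if_pos rfl]

/-! ### The tracking map Φ -/

noncomputable def PhiH : MvPolynomial (Fin (n + 1)) K →ₐ[K] Polynomial (MvPolynomial (Fin n) K) :=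
  aeval (fun i => Fin.cases Polynomial.X
    (fun j => Polynomial.C (MvPolynomial.X j) * Polynomial.X) i)

lemma PhiH_monomial (b : Fin (n + 1) →₀ ℕ) (c : K) :
    PhiH (monomial b c) =
      Polynomial.monomial (expDeg b) (monomial (comapSucc b) c) := by
  rw [PhiH, aeval_monomial]
  rw [Finsupp.prod_fintype _ _ (fun i => pow_zero _)]
  rw [Fin.prod_univ_succ]
  simp only [Fin.cases_zero, Fin.cases_succ]
  have h1 : ∏ j : Fin n, (Polynomial.C (MvPolynomial.X (R := K) j) * Polynomial.X) ^ (b j.succ)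
      = Polynomial.C (∏ j : Fin n, MvPolynomial.X (R := K) j ^ (b j.succ)) *
        Polynomial.X ^ (∑ j : Fin n, b j.succ) := by
    simp_rw [mul_pow]
    rw [Finset.prod_mul_distrib, map_prod]
    simp_rw [map_pow]
    rw [Finset.prod_pow_eq_pow_sum]
  rw [h1]
  have h2 : (monomial (comapSucc b)) c
      = MvPolynomial.C c * ∏ j : Fin n, MvPolynomial.X (R := K) j ^ (b j.succ) := by
    rw [monomial_eq]
    congr 1
    rw [Finsupp.prod_fintype _ _ (fun i => pow_zero _)]
    apply Finset.prod_congr rfl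
    intro j _
    rw [comapSucc_apply]
  have h3 : expDeg b = b 0 + ∑ j : Fin n, b j.succ := by
    rw [expDeg_comapSucc b, expDeg_eq_sum]
    simp [comapSucc_apply]
  rw [← Polynomial.C_mul_X_pow_eq_monomial, h2, h3]
  rw [map_mul, pow_add]
  have h4 : algebraMap K (Polynomial (MvPolynomial (Fin n) K)) c
      = Polynomial.C (MvPolynomial.C c) := by
    rw [Polynomial.algebraMap_apply, MvPolynomial.algebraMap_eq]
  rw [h4]
  ring

lemma PhiH_Hd {d : ℕ} {f : MvPolynomial (Fin n) K} (h : f.totalDegree ≤ d) :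
    PhiH (Hd d f) = Polynomial.monomial d f := by
  rw [Hd, map_sum]
  have hterm : ∀ a ∈ f.support,
      PhiH (monomial (eH d a) (f.coeff a))
        = Polynomial.monomial d (monomial a (f.coeff a)) := by
    intro a ha
    rw [PhiH_monomial, comapSucc_eH, expDeg_eH (le_trans (MvPolynomial.le_totalDegree ha) h)]
  rw [Finset.sum_congr rfl hterm, ← map_sum, support_sum_monomial_coeff]

lemma coeff_PhiH (h : MvPolynomial (Fin (n + 1)) K) (d : ℕ) :
    (PhiH h).coeff d = ∑ b ∈ h.support,
      if expDeg b = d then monomial (comapSucc b) (h.coeff b) else 0 := by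
  conv_lhs => rw [← support_sum_monomial_coeff h]
  rw [map_sum, Polynomial.finset_sum_coeff]
  apply Finset.sum_congr rfl
  intro b _
  rw [PhiH_monomial, Polynomial.coeff_monomial]

lemma totalDegree_coeff_PhiH_le (h : MvPolynomial (Fin (n + 1)) K) (d : ℕ) :
    ((PhiH h).coeff d).totalDegree ≤ d := by
  rw [MvPolynomial.totalDegree]
  apply Finset.sup_le
  intro w hw
  rw [mem_support_iff, coeff_PhiH, MvPolynomial.coeff_sum] at hw
  obtain ⟨b, hb, hnz⟩ := Finset.exists_ne_zero_of_sum_ne_zero hw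
  show expDeg w ≤ d
  by_cases hdb : expDeg b = d
  · rw [if_pos hdb, coeff_monomial] at hnz
    by_cases hwb : comapSucc b = w
    · have h1 := expDeg_comapSucc b
      rw [hwb] at h1
      omega
    · rw [if_neg hwb] at hnz
      exact absurd rfl hnz
  · rw [if_neg hdb] at hnz
    simp at hnz

lemma recon (h : MvPolynomial (Fin (n + 1)) K) {N : ℕ} (hN : h.totalDegree ≤ N) :
    ∑ d ∈ Finset.range (N + 1), Hd d ((PhiH h).coeff d) = h := by
  conv_rhs => rw [← support_sum_monomial_coeff h]
  calc ∑ d ∈ Finset.range (N + 1), Hd d ((PhiH h).coeff d)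
      = ∑ d ∈ Finset.range (N + 1), ∑ b ∈ h.support,
          if expDeg b = d then monomial (eH d (comapSucc b)) (h.coeff b) else 0 := by
        apply Finset.sum_congr rfl
        intro d _
        rw [coeff_PhiH, Hd_finsetSum]
        apply Finset.sum_congr rfl
        intro b _
        rw [apply_ite (Hd d), Hd_monomial, Hd_zero]
    _ = ∑ b ∈ h.support, ∑ d ∈ Finset.range (N + 1),
          if expDeg b = d then monomial (eH d (comapSucc b)) (h.coeff b) else 0 :=
        Finset.sum_comm
    _ = ∑ b ∈ h.support, monomial b (h.coeff b) := by
        apply Finset.sum_congr rfl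
        intro b hb
        rw [Finset.sum_ite_eq (Finset.range (N + 1)) (expDeg b)
          (fun d => monomial (eH d (comapSucc b)) (h.coeff b))]
        have hmem : expDeg b ∈ Finset.range (N + 1) := by
          refine Finset.mem_range.mpr ?_
          have h0 := MvPolynomial.le_totalDegree hb
          have h0' : (b.sum fun _ e => e) = expDeg b := rfl
          show expDeg b < N + 1
          omega
        rw [if_pos hmem, eH_comapSucc]

lemma PhiH_injective : Function.Injective (PhiH (K := K) (n := n)) := by
  have key : ∀ z : MvPolynomial (Fin (n + 1)) K, PhiH z = 0 → z = 0 := by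
    intro z hz
    rw [← recon z (le_refl z.totalDegree), hz]
    simp [Hd_zero]
  intro x y hxy
  have : PhiH (x - y) = 0 := by rw [map_sub, hxy, sub_self]
  have := key _ this
  exact sub_eq_zero.mp this

lemma totalDegree_monomial_mul_le (s : Fin n →₀ ℕ) (k : K) (g : MvPolynomial (Fin n) K) :
    (monomial s k * g).totalDegree ≤ expDeg s + g.totalDegree := by
  refine le_trans (MvPolynomial.totalDegree_mul _ _) (Nat.add_le_add_right ?_ _)
  rw [MvPolynomial.totalDegree]
  apply Finset.sup_le
  intro b hb
  have := MvPolynomial.support_monomial_subset (s := s) (a := k) hb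
  rw [Finset.mem_singleton] at this
  subst this
  exact le_refl _

lemma Hd_monomial_mul {d : ℕ} (s : Fin n →₀ ℕ) (k : K) (g : MvPolynomial (Fin n) K)
    (hdeg : expDeg s + g.totalDegree ≤ d) :
    Hd d (monomial s k * g)
      = monomial (eH (d - g.totalDegree) s) k * Hd g.totalDegree g := by
  apply PhiH_injective
  have h1 : PhiH (Hd d (monomial s k * g)) = Polynomial.monomial d (monomial s k * g) :=
    PhiH_Hd (le_trans (totalDegree_monomial_mul_le s k g) hdeg)
  have h2 : PhiH (Hd g.totalDegree g) = Polynomial.monomial g.totalDegree g :=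
    PhiH_Hd (le_refl _)
  rw [map_mul, h2, PhiH_monomial, comapSucc_eH, expDeg_eH (by omega),
    Polynomial.monomial_mul_monomial, h1]
  have h3 : d - g.totalDegree + g.totalDegree = d := by omega
  rw [h3]

/-! ### Gröbner basis division -/

lemma drl_add_left {N : ℕ} (s : Fin N →₀ ℕ) {u v : Fin N →₀ ℕ} (h : drlLT sigDes u v) :
    drlLT sigDes (s + u) (s + v) := by
  rcases h with h | ⟨hdeg, i, hi, ht⟩
  · exact Or.inl (by rw [expDeg_add, expDeg_add]; omega)
  · refine Or.inr ⟨by rw [expDeg_add, expDeg_add]; omega, i, ?_, ?_⟩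
    · simp only [Finsupp.add_apply]
      omega
    · intro j hj
      simp only [Finsupp.add_apply]
      rw [ht j hj]

lemma exists_leadMono {f : MvPolynomial (Fin n) K} (hf : f ≠ 0) :
    ∃ a, IsLeadMono (drlLT sigDes) f a := by
  classical
  have claim : ∀ s : Finset (Fin n →₀ ℕ), s.Nonempty →
      ∃ a ∈ s, ∀ b ∈ s, b ≠ a → drlLT sigDes b a := by
    intro s
    induction s using Finset.induction_on with
    | empty => rintro ⟨x, hx⟩; exact absurd hx (Finset.notMem_empty x)
    | @insert x s hx ih =>
        intro _
        rcases s.eq_empty_or_nonempty with rfl | hs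
        · refine ⟨x, Finset.mem_insert_self x _, ?_⟩
          intro b hb hbx
          rcases Finset.mem_insert.mp hb with rfl | hb'
          · exact absurd rfl hbx
          · exact absurd hb' (Finset.notMem_empty b)
        · obtain ⟨m, hm, hmax⟩ := ih hs
          have hxm : x ≠ m := fun h => hx (h ▸ hm)
          rcases drl_total hxm with hdrl | hdrl
          · refine ⟨m, Finset.mem_insert_of_mem hm, ?_⟩
            intro b hb hbm
            rcases Finset.mem_insert.mp hb with rfl | hb'
            · exact hdrl
            · exact hmax b hb' hbm
          · refine ⟨x, Finset.mem_insert_self x _, ?_⟩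
            intro b hb hbx
            rcases Finset.mem_insert.mp hb with rfl | hb'
            · exact absurd rfl hbx
            · by_cases hbm : b = m
              · exact hbm ▸ hdrl
              · exact drl_trans (hmax b hb' hbm) hdrl
  obtain ⟨a, ha, hmax⟩ := claim f.support (MvPolynomial.support_nonempty.mpr hf)
  exact ⟨a, ha, hmax⟩

lemma totalDegree_leadMono {f : MvPolynomial (Fin n) K} {a : Fin n →₀ ℕ}
    (h : IsLeadMono (drlLT sigDes) f a) : f.totalDegree = expDeg a := by
  apply le_antisymm
  · rw [MvPolynomial.totalDegree]
    apply Finset.sup_le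
    intro b hb
    show expDeg b ≤ expDeg a
    by_cases hba : b = a
    · rw [hba]
    · exact expDeg_le_of_drl (h.2 b hb hba)
  · exact MvPolynomial.le_totalDegree h.1

lemma exists_le_of_mem_monomial_span {S : Set (MvPolynomial (Fin n) K)}
    (hS : ∀ p ∈ S, ∃ b, p = monomial b (1 : K)) {h : MvPolynomial (Fin n) K}
    (hh : h ∈ Ideal.span S) :
    ∀ a : Fin n →₀ ℕ, coeff a h ≠ 0 → ∃ b, monomial b (1 : K) ∈ S ∧ b ≤ a := by
  induction hh using Submodule.span_induction with
  | mem x hx =>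
      intro a ha
      obtain ⟨b, rfl⟩ := hS x hx
      rw [coeff_monomial] at ha
      by_cases hba : b = a
      · exact ⟨b, hx, hba ▸ le_refl b⟩
      · rw [if_neg hba] at ha
        exact absurd rfl ha
  | zero => intro a ha; simp at ha
  | add x y hx hy ihx ihy =>
      intro a ha
      rw [coeff_add] at ha
      by_cases h1 : coeff a x ≠ 0
      · exact ihx a h1
      · push_neg at h1
        exact ihy a (by intro h2; rw [h1, h2, add_zero] at ha; exact ha rfl)
  | smul r x hx ih =>
      intro a ha
      rw [smul_eq_mul, MvPolynomial.coeff_mul] at ha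
      obtain ⟨p, hp, hpne⟩ := Finset.exists_ne_zero_of_sum_ne_zero ha
      have h2 : coeff p.2 x ≠ 0 := fun h0 => hpne (by rw [h0, mul_zero])
      obtain ⟨b, hbS, hble⟩ := ih p.2 h2
      refine ⟨b, hbS, le_trans hble ?_⟩
      have hpa := Finset.HasAntidiagonal.mem_antidiagonal.mp hp
      calc p.2 ≤ p.1 + p.2 := le_add_self
        _ = a := hpa

variable {G : Finset (MvPolynomial (Fin n) K)} {I : Ideal (MvPolynomial (Fin n) K)}

lemma exists_gb_divides (hGB : IsGroebner (drlLT sigDes) (↑G) I)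
    {a : Fin n →₀ ℕ} (ha : monomial a (1 : K) ∈ initialIdeal (drlLT sigDes) I) :
    ∃ g ∈ G, g ≠ 0 ∧ ∃ bg, IsLeadMono (drlLT sigDes) g bg ∧ bg ≤ a := by
  rw [← hGB.2] at ha
  obtain ⟨b, hbS, hba⟩ := exists_le_of_mem_monomial_span
    (fun p hp => by
      obtain ⟨g, _, _, a', _, hp'⟩ := hp
      exact ⟨a', hp'⟩)
    ha a (by rw [coeff_monomial, if_pos rfl]; exact one_ne_zero)
  obtain ⟨g, hgG, hg0, a', hlm, heq⟩ := hbS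
  have hab : a' = b := by
    rcases (MvPolynomial.monomial_eq_monomial_iff _ _ _ _).mp heq.symm with ⟨h1, _⟩ | ⟨h1, _⟩
    · exact h1
    · exact absurd h1 one_ne_zero
  exact ⟨g, hgG, hg0, b, hab ▸ hlm, hba⟩

lemma Hd_mem_homog_span (hGB : IsGroebner (drlLT sigDes) (↑G) I) :
    ∀ f ∈ I, ∀ d, f.totalDegree ≤ d →
      Hd d f ∈ Ideal.span (homogPoly '' (↑G : Set (MvPolynomial (Fin n) K))) := by
  set J := Ideal.span (homogPoly '' (↑G : Set (MvPolynomial (Fin n) K))) with hJ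
  have main : ∀ a : Fin n →₀ ℕ, ∀ f ∈ I, f ≠ 0 → IsLeadMono (drlLT sigDes) f a →
      ∀ d, f.totalDegree ≤ d → Hd d f ∈ J := by
    intro a0
    refine (drl_wf (N := n)).induction
      (C := fun a => ∀ f ∈ I, f ≠ 0 → IsLeadMono (drlLT sigDes) f a →
        ∀ d, f.totalDegree ≤ d → Hd d f ∈ J) a0 ?_
    intro a IH f hfI hf0 hLM d hd
    have hdega : f.totalDegree = expDeg a := totalDegree_leadMono hLM
    have hainit : monomial a (1 : K) ∈ initialIdeal (drlLT sigDes) I :=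
      Ideal.subset_span ⟨f, hfI, hf0, a, hLM, rfl⟩
    obtain ⟨g, hgG, hg0, bg, hgLM, hle⟩ := exists_gb_divides hGB hainit
    have hdegg : g.totalDegree = expDeg bg := totalDegree_leadMono hgLM
    have hcg : coeff bg g ≠ 0 := mem_support_iff.mp hgLM.1
    have hcf : coeff a f ≠ 0 := mem_support_iff.mp hLM.1
    set c : K := coeff a f / coeff bg g with hc
    set q : MvPolynomial (Fin n) K := monomial (a - bg) c with hq
    set f' : MvPolynomial (Fin n) K := f - q * g with hf'
    have hgI : g ∈ I := hGB.1 hgG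
    have hf'I : f' ∈ I := I.sub_mem hfI (I.mul_mem_left q hgI)
    have hcoeffa : coeff a f' = 0 := by
      rw [hf', coeff_sub, hq, coeff_monomial_mul', if_pos tsub_le_self,
        tsub_tsub_cancel_of_le hle, hc, div_mul_cancel₀ _ hcg, sub_self]
    have hsupp : ∀ z ∈ f'.support, drlLT sigDes z a := by
      intro z hz
      have hcz : coeff z f' ≠ 0 := mem_support_iff.mp hz
      have hzne : z ≠ a := fun h => hcz (h ▸ hcoeffa)
      by_cases hzf : coeff z f ≠ 0
      · exact hLM.2 z (mem_support_iff.mpr hzf) hzne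
      · push_neg at hzf
        have hzqg : coeff z (q * g) ≠ 0 := by
          intro h0
          apply hcz
          rw [hf', coeff_sub, hzf, h0, sub_self]
        rw [hq, coeff_monomial_mul'] at hzqg
        by_cases hle2 : a - bg ≤ z
        · rw [if_pos hle2] at hzqg
          have hu : coeff (z - (a - bg)) g ≠ 0 := fun h0 => hzqg (by rw [h0, mul_zero])
          have hz' : (a - bg) + (z - (a - bg)) = z := add_tsub_cancel_of_le hle2
          have ha' : (a - bg) + bg = a := tsub_add_cancel_of_le hle
          by_cases hubg : z - (a - bg) = bg
          · exfalso
            apply hzne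
            rw [← hz', hubg, ha']
          · have hdrl : drlLT sigDes (z - (a - bg)) bg :=
              hgLM.2 _ (mem_support_iff.mpr hu) hubg
            have := drl_add_left (a - bg) hdrl
            rw [hz', ha'] at this
            exact this
        · rw [if_neg hle2] at hzqg
          exact absurd rfl hzqg
    have hqg_deg : expDeg (a - bg) + g.totalDegree ≤ d := by
      have h1 := expDeg_tsub_add hle
      rw [hdegg]
      rw [hdega] at hd
      omega
    have hqgJ : Hd d (q * g) ∈ J := by
      rw [hq, Hd_monomial_mul _ _ _ hqg_deg, ← homogPoly_eq_Hd]
      exact Ideal.mul_mem_left _ _ (Ideal.subset_span ⟨g, hgG, rfl⟩)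
    by_cases hf'0 : f' = 0
    · have hfeq : f = q * g := by
        have := sub_eq_zero.mp hf'0
        exact this
      rw [hfeq]
      exact hqgJ
    · obtain ⟨a', hLM'⟩ := exists_leadMono hf'0
      have ha' : drlLT sigDes a' a := hsupp a' hLM'.1
      have hdegf' : f'.totalDegree ≤ d := by
        rw [totalDegree_leadMono hLM']
        have h2 : expDeg a' ≤ expDeg a := expDeg_le_of_drl ha'
        rw [hdega] at hd
        omega
      have hf'J : Hd d f' ∈ J := IH a' ha' f' hf'I hf'0 hLM' d hdegf'
      have hfeq : f = f' + q * g := by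
        rw [hf']
        ring
      rw [hfeq, Hd_add]
      exact J.add_mem hf'J hqgJ
  intro f hfI d hd
  by_cases hf0 : f = 0
  · rw [hf0, Hd_zero]
    exact J.zero_mem
  · obtain ⟨a, hLM⟩ := exists_leadMono hf0
    exact main a f hfI hf0 hLM d hd

lemma homogPoly_mem_homog_span (hGB : IsGroebner (drlLT sigDes) (↑G) I)
    {f : MvPolynomial (Fin n) K} (hf : f ∈ I) :
    homogPoly f ∈ Ideal.span (homogPoly '' (↑G : Set (MvPolynomial (Fin n) K))) := by
  rw [homogPoly_eq_Hd]
  exact Hd_mem_homog_span hGB f hf _ (le_refl _)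

lemma dehom_monomial (b : Fin (n + 1) →₀ ℕ) (c : K) :
    dehomAlg n (monomial b c) = monomial (comapSucc b) c := by
  rw [dehomAlg, aeval_monomial, Finsupp.prod_fintype _ _ (fun i => pow_zero _),
    Fin.prod_univ_succ]
  simp only [Fin.cases_zero, Fin.cases_succ, one_pow, one_mul]
  rw [monomial_eq, Finsupp.prod_fintype _ _ (fun i => pow_zero _), MvPolynomial.algebraMap_eq]
  rfl

lemma dehom_homogPoly (f : MvPolynomial (Fin n) K) : dehomAlg n (homogPoly f) = f := by
  rw [homogPoly_eq_Hd, Hd, map_sum]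
  conv_rhs => rw [← support_sum_monomial_coeff f]
  apply Finset.sum_congr rfl
  intro a _
  rw [dehom_monomial, comapSucc_eH]

lemma span_G_eq (hGB : IsGroebner (drlLT sigDes) (↑G) I) :
    Ideal.span (↑G : Set (MvPolynomial (Fin n) K)) = I := by
  apply le_antisymm
  · exact Ideal.span_le.mpr hGB.1
  · intro f hf
    have h1 := homogPoly_mem_homog_span hGB hf
    have h2 : dehomAlg n (homogPoly f) ∈
        Ideal.map (dehomAlg n) (Ideal.span (homogPoly '' (↑G : Set (MvPolynomial (Fin n) K)))) :=
      Ideal.mem_map_of_mem _ h1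
    rw [dehom_homogPoly, Ideal.map_span, ← Set.image_comp] at h2
    have himg : (⇑(dehomAlg n) ∘ homogPoly) '' (↑G : Set (MvPolynomial (Fin n) K))
        = (↑G : Set (MvPolynomial (Fin n) K)) := by
      rw [show ⇑(dehomAlg (K := K) n) ∘ (homogPoly (K := K) (q := n)) = id from funext fun g => by rw [Function.comp_apply, id, dehom_homogPoly],
        Set.image_id]
    rw [himg] at h2
    exact h2

/-! ### Saturation and nonzerodivisor -/

def coeffIdeal (I : Ideal (MvPolynomial (Fin n) K)) :
    Ideal (Polynomial (MvPolynomial (Fin n) K)) where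
  carrier := {p | ∀ k, p.coeff k ∈ I}
  add_mem' := by
    intro p q hp hq k
    rw [Polynomial.coeff_add]
    exact I.add_mem (hp k) (hq k)
  zero_mem' := by
    intro k
    simp
  smul_mem' := by
    intro q p hp k
    rw [smul_eq_mul, Polynomial.coeff_mul]
    exact Ideal.sum_mem I (fun x _ => I.mul_mem_left _ (hp x.2))

lemma mem_coeffIdeal {I : Ideal (MvPolynomial (Fin n) K)}
    {p : Polynomial (MvPolynomial (Fin n) K)} :
    p ∈ coeffIdeal I ↔ ∀ k, p.coeff k ∈ I := Iff.rfl

lemma homog_span_eq_comap {G : Finset (MvPolynomial (Fin n) K)}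
    {I : Ideal (MvPolynomial (Fin n) K)} (hGB : IsGroebner (drlLT sigDes) (↑G) I) :
    Ideal.span (homogPoly '' (↑G : Set (MvPolynomial (Fin n) K)))
      = Ideal.comap PhiH (coeffIdeal I) := by
  apply le_antisymm
  · rw [Ideal.span_le]
    rintro x ⟨g, hgG, rfl⟩
    show PhiH (homogPoly g) ∈ coeffIdeal I
    rw [homogPoly_eq_Hd, PhiH_Hd (le_refl _), mem_coeffIdeal]
    intro k
    rw [Polynomial.coeff_monomial]
    by_cases hk : g.totalDegree = k
    · rw [if_pos hk]
      exact hGB.1 hgG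
    · rw [if_neg hk]
      exact I.zero_mem
  · intro h hh
    rw [Ideal.mem_comap, mem_coeffIdeal] at hh
    rw [← recon h (le_refl h.totalDegree)]
    apply Ideal.sum_mem
    intro d _
    exact Hd_mem_homog_span hGB _ (hh d) d (totalDegree_coeff_PhiH_le h d)

lemma PhiH_X0 : PhiH (X 0 : MvPolynomial (Fin (n + 1)) K) = Polynomial.X := by
  rw [PhiH, aeval_X, Fin.cases_zero]

lemma x0_nzd {G : Finset (MvPolynomial (Fin n) K)} {I : Ideal (MvPolynomial (Fin n) K)}
    (hGB : IsGroebner (drlLT sigDes) (↑G) I) {h : MvPolynomial (Fin (n + 1)) K}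
    (hh : X 0 * h ∈ Ideal.span (homogPoly '' (↑G : Set (MvPolynomial (Fin n) K)))) :
    h ∈ Ideal.span (homogPoly '' (↑G : Set (MvPolynomial (Fin n) K))) := by
  rw [homog_span_eq_comap hGB] at hh ⊢
  rw [Ideal.mem_comap, mem_coeffIdeal] at hh ⊢
  intro k
  have h1 := hh (k + 1)
  rw [map_mul, PhiH_X0, Polynomial.coeff_X_mul] at h1
  exact h1

lemma mem_maxSat {σ : Type*} {I : Ideal (MvPolynomial σ K)} {x : MvPolynomial σ K} :
    x ∈ maxSat I ↔ ∃ k : ℕ, x ∈ Submodule.colon I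
      (((Ideal.span (Set.range (MvPolynomial.X : σ → MvPolynomial σ K))) ^ k :
        Ideal (MvPolynomial σ K)) : Set (MvPolynomial σ K)) := by
  rw [maxSat]
  apply Submodule.mem_iSup_of_directed
  intro k l
  refine ⟨max k l, ?_, ?_⟩ <;>
  · intro r hr
    rw [Submodule.mem_colon] at hr ⊢
    intro p hp
    exact hr p (Ideal.pow_le_pow_right (by omega) hp)

lemma maxSat_nzd {G : Finset (MvPolynomial (Fin n) K)} {I : Ideal (MvPolynomial (Fin n) K)}
    (hGB : IsGroebner (drlLT sigDes) (↑G) I) :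
    ∀ f, X 0 * f ∈ maxSat (Ideal.span (homogPoly '' (↑G : Set (MvPolynomial (Fin n) K)))) →
      f ∈ maxSat (Ideal.span (homogPoly '' (↑G : Set (MvPolynomial (Fin n) K)))) := by
  intro f hf
  rw [mem_maxSat] at hf ⊢
  obtain ⟨k, hk⟩ := hf
  refine ⟨k, ?_⟩
  rw [Submodule.mem_colon] at hk ⊢
  intro p hp
  have h1 := hk p hp
  rw [smul_eq_mul] at h1 ⊢
  apply x0_nzd hGB
  have : X 0 * (f * p) = X 0 * f * p := by ring
  rw [this]
  exact h1

/-! ### Finiteness of zero loci -/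

section Zeros

lemma primes_eq_of_dim_zero {B : Type*} [CommRing B] (hdim : ringKrullDim B = 0)
    {p q : Ideal B} (hp : p.IsPrime) (hq : q.IsPrime) (hle : p ≤ q) : p = q := by
  by_contra hne
  have hlt : p < q := lt_of_le_of_ne hle hne
  let P : PrimeSpectrum B := ⟨p, hp⟩
  let Q : PrimeSpectrum B := ⟨q, hq⟩
  have hPQ : P < Q := hlt
  let c : LTSeries (PrimeSpectrum B) :=
    { length := 1
      toFun := ![P, Q]
      step := by
        intro i
        fin_cases i
        simpa using hPQ }
  have hlen := Order.LTSeries.length_le_krullDim c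
  have hc : c.length = 1 := rfl
  rw [hc] at hlen
  rw [show ringKrullDim B = Order.krullDim (PrimeSpectrum B) from rfl] at hdim
  rw [hdim] at hlen
  norm_num at hlen

variable {I : Ideal (MvPolynomial (Fin n) K)}

lemma finite_maximal_over
    (hdim : ringKrullDim (MvPolynomial (Fin n) K ⧸ I) = 0) :
    {M : Ideal (MvPolynomial (Fin n) K) | I ≤ M ∧ M.IsMaximal}.Finite := by
  have hfin : (minimalPrimes (MvPolynomial (Fin n) K ⧸ I)).Finite :=
    minimalPrimes.finite_of_isNoetherianRing _
  apply Set.Finite.of_finite_image (f := fun M => M.map (Ideal.Quotient.mk I))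
  · apply hfin.subset
    rintro _ ⟨M, ⟨hIM, hMmax⟩, rfl⟩
    haveI : M.IsPrime := hMmax.isPrime
    have hprime : (M.map (Ideal.Quotient.mk I)).IsPrime :=
      Ideal.map_isPrime_of_surjective Ideal.Quotient.mk_surjective
        (by rw [Ideal.mk_ker]; exact hIM)
    refine ⟨⟨hprime, bot_le⟩, ?_⟩
    intro q' hq' hle
    exact le_of_eq (primes_eq_of_dim_zero hdim hq'.1 hprime hle).symm
  · intro M1 hM1 M2 hM2 heq
    have h1 : Ideal.comap (Ideal.Quotient.mk I) (M1.map (Ideal.Quotient.mk I)) = M1 := by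
      rw [Ideal.comap_map_of_surjective _ Ideal.Quotient.mk_surjective]
      rw [← RingHom.ker_eq_comap_bot, Ideal.mk_ker]
      exact sup_eq_left.mpr hM1.1
    have h2 : Ideal.comap (Ideal.Quotient.mk I) (M2.map (Ideal.Quotient.mk I)) = M2 := by
      rw [Ideal.comap_map_of_surjective _ Ideal.Quotient.mk_surjective]
      rw [← RingHom.ker_eq_comap_bot, Ideal.mk_ker]
      exact sup_eq_left.mpr hM2.1
    rw [← h1, ← h2]
    exact congrArg (Ideal.comap (Ideal.Quotient.mk I)) heq

lemma zeroLocus_finite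
    (hdim : ringKrullDim (MvPolynomial (Fin n) K ⧸ I) = 0) :
    (MvPolynomial.zeroLocus K I).Finite := by
  apply Set.Finite.of_finite_image
    (f := fun v : Fin n → K => RingHom.ker (MvPolynomial.eval v))
  · apply (finite_maximal_over hdim).subset
    rintro _ ⟨v, hv, rfl⟩
    refine ⟨fun f hf => ?_, RingHom.ker_isMaximal_of_surjective _ (fun c => ⟨C c, eval_C c⟩)⟩
    exact hv f hf
  · intro v1 hv1 v2 hv2 heq
    funext i
    have h1 : X i - C (v1 i) ∈ RingHom.ker (MvPolynomial.eval v1) := by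
      rw [RingHom.mem_ker, map_sub, eval_X, eval_C, sub_self]
    rw [show RingHom.ker (MvPolynomial.eval v1) = RingHom.ker (MvPolynomial.eval v2) from heq]
      at h1
    rw [RingHom.mem_ker, map_sub, eval_X, eval_C, sub_eq_zero] at h1
    exact h1.symm

end Zeros

/-! ### Evaluation formulas -/

section Eval

variable {L' : Type*} [CommSemiring L']

lemma eval_map_monomial (φ : K →+* L') (w : Fin n → L') (a : Fin n →₀ ℕ) (c : K) :
    eval w (map φ (monomial a c)) = φ c * ∏ j, w j ^ a j := by
  rw [map_monomial, eval_monomial, Finsupp.prod_fintype _ _ (fun i => pow_zero _)]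

lemma eval_map_aff (φ : K →+* L') (w : Fin n → L') (g : MvPolynomial (Fin n) K) :
    eval w (map φ g) = ∑ a ∈ g.support, φ (coeff a g) * ∏ j, w j ^ a j := by
  conv_lhs => rw [← support_sum_monomial_coeff g]
  rw [map_sum, map_sum]
  apply Finset.sum_congr rfl
  intro a _
  rw [eval_map_monomial]

lemma eval_map_Hd (φ : K →+* L') (v : Fin (n + 1) → L') (g : MvPolynomial (Fin n) K)
    (d : ℕ) :
    eval v (map φ (Hd d g)) = ∑ a ∈ g.support,
      φ (coeff a g) * (v 0 ^ (d - expDeg a) * ∏ j, v j.succ ^ a j) := by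
  rw [Hd, map_sum, map_sum]
  apply Finset.sum_congr rfl
  intro a _
  rw [map_monomial, eval_monomial, Finsupp.prod_fintype _ _ (fun i => pow_zero _),
    Fin.prod_univ_succ, eH_apply_zero]
  congr 2
  · apply Finset.prod_congr rfl
    intro j _
    rw [eH_apply_succ]

end Eval

section Scale

variable {L' : Type*} [Field L']

lemma scale_eval (φ : K →+* L') {v : Fin (n + 1) → L'} (hv0 : v 0 ≠ 0)
    (g : MvPolynomial (Fin n) K) {d : ℕ} (hd : g.totalDegree ≤ d) :
    (v 0) ^ d * eval (fun j => v j.succ * (v 0)⁻¹) (map φ g) = eval v (map φ (Hd d g)) := by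
  rw [eval_map_aff, eval_map_Hd, Finset.mul_sum]
  apply Finset.sum_congr rfl
  intro a ha
  have hda : expDeg a ≤ d := by
    have := MvPolynomial.le_totalDegree ha
    have h0 : (a.sum fun _ e => e) = expDeg a := rfl
    omega
  have h1 : ∏ j, (v j.succ * (v 0)⁻¹) ^ a j
      = (∏ j, v j.succ ^ a j) * ((v 0)⁻¹) ^ expDeg a := by
    simp_rw [mul_pow]
    rw [Finset.prod_mul_distrib, Finset.prod_pow_eq_pow_sum, expDeg_eq_sum]
  rw [h1]
  have h2 : (v 0) ^ d = (v 0) ^ (d - expDeg a) * (v 0) ^ expDeg a := by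
    rw [← pow_add]
    congr 1
    omega
  rw [h2]
  have h3 : (v 0) ^ expDeg a * ((v 0)⁻¹) ^ expDeg a = 1 := by
    rw [← mul_pow, mul_inv_cancel₀ hv0, one_pow]
  calc (v 0) ^ (d - expDeg a) * (v 0) ^ expDeg a *
        (φ (coeff a g) * ((∏ j, v j.succ ^ a j) * ((v 0)⁻¹) ^ expDeg a))
      = φ (coeff a g) * ((v 0) ^ (d - expDeg a) * ∏ j, v j.succ ^ a j) *
          ((v 0) ^ expDeg a * ((v 0)⁻¹) ^ expDeg a) := by ring
    _ = φ (coeff a g) * ((v 0) ^ (d - expDeg a) * ∏ j, v j.succ ^ a j) := by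
        rw [h3, mul_one]

end Scale

/-! ### Transfer to the algebraic closure -/

section Closed

variable [IsAlgClosed K]

noncomputable def zerosL (I : Ideal (MvPolynomial (Fin n) K)) :
    Set (Fin n → AlgebraicClosure K) :=
  {u | ∀ f ∈ I, eval u (map (algebraMap K (AlgebraicClosure K)) f) = 0}

lemma zerosL_finite {I : Ideal (MvPolynomial (Fin n) K)}
    (hfin : (MvPolynomial.zeroLocus K I).Finite) : (zerosL I).Finite := by
  set L := AlgebraicClosure K
  set φ := algebraMap K L with hφ
  have hsurj : Function.Surjective φ :=
    (IsAlgClosed.algebraMap_bijective_of_isIntegral (k := K)).2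
  set e : K ≃+* L := RingEquiv.ofBijective φ ⟨(algebraMap K L).injective, hsurj⟩ with he
  have hcoe : ∀ x : K, e x = φ x := fun x => rfl
  have key : ∀ (u : Fin n → L) (f : MvPolynomial (Fin n) K),
      φ (eval (fun i => e.symm (u i)) f) = eval u (map φ f) := by
    intro u f
    rw [MvPolynomial.eval_map]
    have h1 : eval (fun i => e.symm (u i)) f
        = MvPolynomial.eval₂ (RingHom.id K) (fun i => e.symm (u i)) f :=
      (MvPolynomial.eval₂_id (g := fun i => e.symm (u i)) f).symm
    rw [h1, MvPolynomial.eval₂_comp_left φ (RingHom.id K) _ f, RingHom.comp_id]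
    congr 1
    funext i
    show φ (e.symm (u i)) = u i
    rw [← hcoe, RingEquiv.apply_symm_apply]
  apply Set.Finite.of_finite_image (f := fun u (i : Fin n) => e.symm (u i))
  · apply hfin.subset
    rintro _ ⟨u, hu, rfl⟩
    rw [MvPolynomial.mem_zeroLocus_iff]
    intro p hp
    have h0 : eval u (map φ p) = 0 := hu p hp
    have := key u p
    rw [h0] at this
    exact (algebraMap K L).injective (by rw [map_zero]; exact this)
  · intro u1 _ u2 _ heq
    funext i
    have h1 : e.symm (u1 i) = e.symm (u2 i) := congrFun heq i
    exact e.symm.injective h1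

end Closed

section Closed2

variable [IsAlgClosed K] {G : Finset (MvPolynomial (Fin n) K)}
  {I : Ideal (MvPolynomial (Fin n) K)}

lemma exists_purepower (hGB : IsGroebner (drlLT sigDes) (↑G) I) (hne : I ≠ ⊤)
    (hZK : (MvPolynomial.zeroLocus K I).Finite) (i : Fin n) :
    ∃ g ∈ G, g ≠ 0 ∧ ∃ e : ℕ, IsLeadMono (drlLT sigDes) g (Finsupp.single i e) := by
  classical
  set p0 : Polynomial K := ∏ u ∈ hZK.toFinset, (Polynomial.X - Polynomial.C (u i)) with hp0
  have hp0m : p0.Monic :=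
    Polynomial.monic_prod_of_monic _ _ (fun u _ => Polynomial.monic_X_sub_C _)
  have hvan : Polynomial.aeval (X i : MvPolynomial (Fin n) K) p0 ∈
      MvPolynomial.vanishingIdeal K (MvPolynomial.zeroLocus K I) := by
    rw [MvPolynomial.mem_vanishingIdeal_iff]
    intro x hx
    have heval : eval x (Polynomial.aeval (X i : MvPolynomial (Fin n) K) p0)
        = Polynomial.eval (x i) p0 := by
      rw [Polynomial.aeval_def, Polynomial.hom_eval₂]
      have hcomp : (MvPolynomial.eval x).comp (algebraMap K (MvPolynomial (Fin n) K))
          = RingHom.id K := by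
        ext c
        simp [MvPolynomial.algebraMap_eq]
      rw [hcomp, eval_X]
      rfl
    change eval x (Polynomial.aeval (X i : MvPolynomial (Fin n) K) p0) = 0
    rw [heval, hp0, Polynomial.eval_prod]
    apply Finset.prod_eq_zero ((Set.Finite.mem_toFinset hZK).mpr hx)
    rw [Polynomial.eval_sub, Polynomial.eval_X, Polynomial.eval_C, sub_self]
  rw [MvPolynomial.vanishingIdeal_zeroLocus_eq_radical, Ideal.mem_radical_iff] at hvan
  obtain ⟨m, hm⟩ := hvan
  set q : Polynomial K := p0 ^ m with hq
  have hq0 : q ≠ 0 := pow_ne_zero m hp0m.ne_zero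
  have hf0I : Polynomial.aeval (X i : MvPolynomial (Fin n) K) q ∈ I := by
    rw [hq, map_pow]
    exact hm
  set f0 := Polynomial.aeval (X i : MvPolynomial (Fin n) K) q with hf0
  have hrepr : f0 = ∑ e ∈ q.support, monomial (Finsupp.single i e) (q.coeff e) := by
    rw [hf0, Polynomial.aeval_def, Polynomial.eval₂_eq_sum, Polynomial.sum_def]
    apply Finset.sum_congr rfl
    intro e _
    rw [MvPolynomial.algebraMap_eq, X_pow_eq_monomial, C_mul_monomial, mul_one]
  have hcoeff : ∀ jj : ℕ, coeff (Finsupp.single i jj) f0 = q.coeff jj := by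
    intro jj
    rw [hrepr, MvPolynomial.coeff_sum]
    have hterm : ∀ e ∈ q.support,
        coeff (Finsupp.single i jj) (monomial (Finsupp.single i e) (q.coeff e))
          = if e = jj then q.coeff e else 0 := by
      intro e _
      rw [coeff_monomial]
      by_cases hejj : e = jj
      · rw [if_pos hejj, if_pos (by rw [hejj])]
      · rw [if_neg hejj, if_neg (fun hc => hejj (Finsupp.single_injective i hc))]
    rw [Finset.sum_congr rfl hterm, Finset.sum_ite_eq' q.support jj (fun e => q.coeff e)]
    by_cases hjj : jj ∈ q.support
    · rw [if_pos hjj]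
    · rw [if_neg hjj]
      exact (Polynomial.notMem_support_iff.mp hjj).symm
  set D := q.natDegree with hD
  have hqD : q.coeff D ≠ 0 := Polynomial.leadingCoeff_ne_zero.mpr hq0
  have hf0ne : f0 ≠ 0 := by
    intro h0
    have h1 := hcoeff D
    rw [h0, MvPolynomial.coeff_zero] at h1
    exact hqD h1.symm
  have hLM : IsLeadMono (drlLT sigDes) f0 (Finsupp.single i D) := by
    constructor
    · rw [mem_support_iff, hcoeff]
      exact hqD
    · intro z hz hzne
      have hzrep : ∃ e ∈ q.support, z = Finsupp.single i e := by
        have hcz := mem_support_iff.mp hz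
        rw [hrepr, MvPolynomial.coeff_sum] at hcz
        obtain ⟨e, he, hene⟩ := Finset.exists_ne_zero_of_sum_ne_zero hcz
        rw [coeff_monomial] at hene
        by_cases hc : Finsupp.single i e = z
        · exact ⟨e, he, hc.symm⟩
        · rw [if_neg hc] at hene
          exact absurd rfl hene
      obtain ⟨e, he, rfl⟩ := hzrep
      have hene : e ≠ D := fun hc => hzne (by rw [hc])
      have heD : e ≤ D := Polynomial.le_natDegree_of_ne_zero (Polynomial.mem_support_iff.mp he)
      exact Or.inl (by rw [expDeg_single, expDeg_single]; omega)
  have hinit : monomial (Finsupp.single i D) (1 : K) ∈ initialIdeal (drlLT sigDes) I :=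
    Ideal.subset_span ⟨f0, hf0I, hf0ne, _, hLM, rfl⟩
  obtain ⟨g, hgG, hg0, bg, hgLM, hle⟩ := exists_gb_divides hGB hinit
  have hbg : bg = Finsupp.single i (bg i) := by
    ext j
    by_cases hji : j = i
    · subst hji
      rw [Finsupp.single_eq_same]
    · have hj := Finsupp.le_def.mp hle j
      rw [Finsupp.single_eq_of_ne' (Ne.symm hji)] at hj ⊢
      omega
  exact ⟨g, hgG, hg0, bg i, hbg ▸ hgLM⟩

end Closed2

section Closed3

variable [IsAlgClosed K] {G : Finset (MvPolynomial (Fin n) K)}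
  {I : Ideal (MvPolynomial (Fin n) K)}

lemma rep0_ne_zero (hGB : IsGroebner (drlLT sigDes) (↑G) I) (hne : I ≠ ⊤)
    (hZK : (MvPolynomial.zeroLocus K I).Finite)
    {v : Fin (n + 1) → AlgebraicClosure K}
    (hv : ∀ g ∈ G, eval v (map (algebraMap K (AlgebraicClosure K)) (homogPoly g)) = 0)
    (hvne : v ≠ 0) : v 0 ≠ 0 := by
  classical
  intro hv0
  obtain ⟨j0, hj0⟩ : ∃ j : Fin n, v j.succ ≠ 0 := by
    by_contra hc
    push_neg at hc
    apply hvne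
    funext idx
    rw [Pi.zero_apply]
    induction idx using Fin.cases with
    | zero => exact hv0
    | succ j => exact hc j
  set s : Finset (Fin n) := Finset.univ.filter (fun j => v j.succ ≠ 0) with hs
  have hsne : s.Nonempty := ⟨j0, by simp [hs, hj0]⟩
  set i := s.max' hsne with hi
  have hwi : v i.succ ≠ 0 := by
    have := s.max'_mem hsne
    simpa [hs] using this
  have htail : ∀ j : Fin n, i < j → v j.succ = 0 := by
    intro j hj
    by_contra hc
    have hjs : j ∈ s := by simp [hs, hc]
    have := s.le_max' j hjs
    rw [← hi] at this
    exact absurd hj (not_lt.mpr this)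
  obtain ⟨g, hgG, hg0, e, hgLM⟩ := exists_purepower hGB hne hZK i
  have hdegg : g.totalDegree = e := by
    rw [totalDegree_leadMono hgLM, expDeg_single]
  by_cases he0 : e = 0
  · subst he0
    have hbg0 : (Finsupp.single i 0 : Fin n →₀ ℕ) = 0 := Finsupp.single_zero i
    have hzero : ∀ z ∈ g.support, z = 0 := by
      intro z hz
      by_cases hz0 : z = Finsupp.single i 0
      · rw [hz0, hbg0]
      · rcases hgLM.2 z hz hz0 with h | ⟨hdeg, l, hl, _⟩
        · rw [expDeg_single] at h
          omega
        · exfalso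
          rw [expDeg_single] at hdeg
          rw [hbg0, Finsupp.coe_zero, Pi.zero_apply] at hl
          have := apply_le_expDeg z l
          omega
    have hsupp : g.support = {0} := by
      apply Finset.eq_singleton_iff_unique_mem.mpr
      exact ⟨by rw [← hbg0]; exact hgLM.1, hzero⟩
    have hgC : g = C (coeff 0 g) := by
      conv_lhs => rw [← support_sum_monomial_coeff g]
      rw [hsupp, Finset.sum_singleton, monomial_zero']
    have hc0 : coeff 0 g ≠ 0 := by
      rw [← mem_support_iff, hsupp]
      exact Finset.mem_singleton_self 0
    apply hne
    apply Ideal.eq_top_of_isUnit_mem I (show g ∈ I from hGB.1 hgG)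
    rw [hgC]
    exact (isUnit_iff_ne_zero.mpr hc0).map (C : K →+* MvPolynomial (Fin n) K)
  · have h0 := hv g hgG
    rw [homogPoly_eq_Hd, eval_map_Hd] at h0
    rw [Finset.sum_eq_single (Finsupp.single i e) ?hterm1 ?hterm2] at h0
    case hterm2 => exact fun hc => absurd hgLM.1 hc
    case hterm1 =>
      intro a ha hane
      rcases hgLM.2 a ha hane with hlt | ⟨hdeq, l, hl, htl⟩
      · have hexp : g.totalDegree - expDeg a ≠ 0 := by
          rw [expDeg_single] at hlt
          omega
        rw [hv0, zero_pow hexp, zero_mul, mul_zero]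
      · rw [expDeg_single] at hdeq
        have hprod : ∏ j, v j.succ ^ a j = 0 := by
          rcases lt_trichotomy l i with hli | hli | hli
          · exfalso
            have hai : a i = e := by
              have h2 := htl i hli
              rw [Finsupp.single_eq_same] at h2
              exact h2
            have hlne : l ≠ i := ne_of_lt hli
            rw [Finsupp.single_eq_of_ne' (Ne.symm hlne)] at hl
            have := pair_le_expDeg a (Ne.symm hlne)
            omega
          · exfalso
            rw [hli, Finsupp.single_eq_same] at hl
            have := apply_le_expDeg a i
            omega
          · apply Finset.prod_eq_zero (Finset.mem_univ l)
            rw [htail l hli]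
            apply zero_pow
            have hlne : l ≠ i := (ne_of_lt hli).symm
            rw [Finsupp.single_eq_of_ne' (Ne.symm hlne)] at hl
            omega
        rw [hprod, mul_zero, mul_zero]
    rw [expDeg_single, hdegg, Nat.sub_self, pow_zero, one_mul] at h0
    rw [Finset.prod_eq_single i
      (fun b _ hbne => by rw [Finsupp.single_eq_of_ne' (Ne.symm hbne), pow_zero])
      (fun hc => absurd (Finset.mem_univ i) hc)] at h0
    rw [Finsupp.single_eq_same] at h0
    have hcg : coeff (Finsupp.single i e) g ≠ 0 := mem_support_iff.mp hgLM.1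
    have hφcg : algebraMap K (AlgebraicClosure K) (coeff (Finsupp.single i e) g) ≠ 0 :=
      fun hc => hcg ((algebraMap K (AlgebraicClosure K)).injective (by rw [hc, map_zero]))
    exact (mul_ne_zero hφcg (pow_ne_zero e hwi)) h0

lemma projZeros_finite (hGB : IsGroebner (drlLT sigDes) (↑G) I) (hne : I ≠ ⊤)
    (hdim : ringKrullDim (MvPolynomial (Fin n) K ⧸ I) = 0) :
    (projZerosBar (Ideal.span
      (homogPoly '' (↑G : Set (MvPolynomial (Fin n) K))))).Finite := by
  classical
  set L := AlgebraicClosure K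
  set φ := algebraMap K L with hφ
  have hZK := zeroLocus_finite hdim
  have hZL := zerosL_finite (I := I) hZK
  apply Set.Finite.of_finite_image
    (f := fun x : Projectivization L (Fin (n + 1) → L) =>
      fun j : Fin n => x.rep j.succ * (x.rep 0)⁻¹)
  · apply hZL.subset
    rintro _ ⟨x, hx, rfl⟩
    have hvG : ∀ g ∈ G, eval x.rep (map φ (homogPoly g)) = 0 := fun g hg =>
      hx (homogPoly g) (Ideal.subset_span ⟨g, hg, rfl⟩)
    have hv0 : x.rep 0 ≠ 0 :=
      rep0_ne_zero hGB hne hZK hvG (Projectivization.rep_nonzero x)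
    intro f hf
    have hker : ∀ g ∈ G, eval (fun j : Fin n => x.rep j.succ * (x.rep 0)⁻¹) (map φ g) = 0 := by
      intro g hg
      have hscale := scale_eval φ hv0 g (le_refl g.totalDegree)
      rw [← homogPoly_eq_Hd, hvG g hg] at hscale
      rcases mul_eq_zero.mp hscale with h | h
      · exact absurd h (pow_ne_zero _ hv0)
      · exact h
    have hIker : I ≤ RingHom.ker ((MvPolynomial.eval
        (fun j : Fin n => x.rep j.succ * (x.rep 0)⁻¹)).comp (MvPolynomial.map φ)) := by
      rw [← span_G_eq hGB, Ideal.span_le]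
      intro g hg
      rw [SetLike.mem_coe, RingHom.mem_ker, RingHom.comp_apply]
      exact hker g hg
    have := hIker hf
    rw [RingHom.mem_ker, RingHom.comp_apply] at this
    exact this
  · intro x hx y hy heq
    have hvGx : ∀ g ∈ G, eval x.rep (map φ (homogPoly g)) = 0 := fun g hg =>
      hx (homogPoly g) (Ideal.subset_span ⟨g, hg, rfl⟩)
    have hvGy : ∀ g ∈ G, eval y.rep (map φ (homogPoly g)) = 0 := fun g hg =>
      hy (homogPoly g) (Ideal.subset_span ⟨g, hg, rfl⟩)
    have hx0 : x.rep 0 ≠ 0 := rep0_ne_zero hGB hne hZK hvGx (Projectivization.rep_nonzero x)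
    have hy0 : y.rep 0 ≠ 0 := rep0_ne_zero hGB hne hZK hvGy (Projectivization.rep_nonzero y)
    have hkey : (y.rep 0 * (x.rep 0)⁻¹) • x.rep = y.rep := by
      funext idx
      rw [Pi.smul_apply, smul_eq_mul]
      induction idx using Fin.cases with
      | zero => rw [inv_mul_cancel_right₀ hx0]
      | succ j =>
          have h := congrFun heq j
          simp only at h
          calc y.rep 0 * (x.rep 0)⁻¹ * x.rep j.succ
              = (x.rep j.succ * (x.rep 0)⁻¹) * y.rep 0 := by ring
            _ = (y.rep j.succ * (y.rep 0)⁻¹) * y.rep 0 := by rw [h]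
            _ = y.rep j.succ := by rw [inv_mul_cancel_right₀ hy0]
    have hxy : Projectivization.mk L y.rep (Projectivization.rep_nonzero y)
        = Projectivization.mk L x.rep (Projectivization.rep_nonzero x) := by
      rw [Projectivization.mk_eq_mk_iff']
      exact ⟨y.rep 0 * (x.rep 0)⁻¹, hkey⟩
    rw [Projectivization.mk_rep, Projectivization.mk_rep] at hxy
    exact hxy.symm

end Closed3

end Stmt3Aux

/-- For an algebraically closed field `K` and a polynomial system `F` with
`(F) ≠ (1)` zero-dimensional, the homogenization of any DRL Gröbner basis of `(F)` generates
an ideal in generic coordinates. -/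
theorem stmt_3 {K : Type*} [Field K] [IsAlgClosed K] {n m : ℕ}
    (F : Fin m → MvPolynomial (Fin n) K)
    (hne : Ideal.span (Set.range F) ≠ ⊤)
    (hdim : ringKrullDim (MvPolynomial (Fin n) K ⧸ Ideal.span (Set.range F)) = 0)
    (G : Finset (MvPolynomial (Fin n) K))
    (hGB : IsGroebner (drlLT sigDes) (↑G : Set (MvPolynomial (Fin n) K))
      (Ideal.span (Set.range F))) :
    GenCoords (0 : Fin (n + 1))
      (Ideal.span (homogPoly '' (↑G : Set (MvPolynomial (Fin n) K)))) := by
  constructor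
  · exact Stmt3Aux.projZeros_finite hGB hne hdim
  · right
    exact Stmt3Aux.maxSat_nzd hGB
end

section
/- Let K be a field, let n ≥ 2, and let f_1,…,f_n ∈ K[x_1,…,x_{n−1},y] be a univariate keyed iterated polynomial system built from g_1,…,g_n ∈ K[x,y] and p, c ∈ K. Define ĝ_1 = g_1(p,y) ∈ K[y], ĝ_i = g_i(ĝ_{i−1}(y), y) ∈ K[y] for 2 ≤ i ≤ n−1, and ĝ_n = g_n(ĝ_{n−1}(y), y) − c ∈ K[y]. Then (f_1,…,f_n) = (x_1 − ĝ_1, …, x_{n−1} − ĝ_{n−1}, ĝ_n) as ideals, and {x_1 − ĝ_1, …, x_{n−1} − ĝ_{n−1}, ĝ_n} is a Gröbner basis of this ideal with respect to the lexicographic order x_1 > ⋯ > x_{n−1} > y. -/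
open MvPolynomial
open Fin.NatCast

namespace KIPS
variable {K : Type*} [Field K]

lemma aeval_pair_sub_mem {R : Type*} [CommRing R] [Algebra K R]
    (h : MvPolynomial (Fin 2) K) (A B D : R) :
    aeval ![A, D] h - aeval ![B, D] h ∈ Ideal.span {A - B} := by
  set I : Ideal R := Ideal.span {A - B} with hI
  rw [← Ideal.Quotient.eq]
  have key : ∀ E : R, Ideal.Quotient.mk I (aeval ![E, D] h)
      = aeval ![Ideal.Quotient.mk I E, Ideal.Quotient.mk I D] h := by
    intro E
    have h2 := AlgHom.congr_fun (MvPolynomial.comp_aeval (![E, D]) (Ideal.Quotient.mkₐ K I)) h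
    simp only [AlgHom.comp_apply, Ideal.Quotient.mkₐ_eq_mk] at h2
    rw [h2]
    have h3 : (fun i => Ideal.Quotient.mk I (![E, D] i))
        = ![Ideal.Quotient.mk I E, Ideal.Quotient.mk I D] := by
      funext i; fin_cases i <;> simp
    rw [h3]
  rw [key A, key B]
  have hh : Ideal.Quotient.mk I A = Ideal.Quotient.mk I B := by
    rw [Ideal.Quotient.eq]; exact Ideal.subset_span rfl
  rw [hh]

lemma yPoly_C (m : ℕ) (r : K) : yPoly m (Polynomial.C r) = C r := by
  simp [yPoly]

lemma yPoly_X (m : ℕ) : yPoly m (Polynomial.X : Polynomial K) = X ((m : ℕ) : Fin (m + 1)) := by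
  simp [yPoly]

lemma yPoly_aeval (m : ℕ) (h : MvPolynomial (Fin 2) K) (q : Polynomial K) :
    yPoly m (aeval ![q, Polynomial.X] h)
      = aeval ![yPoly m q, X ((m : ℕ) : Fin (m + 1))] h := by
  have h2 := AlgHom.congr_fun (MvPolynomial.comp_aeval (![q, Polynomial.X])
    (Polynomial.aeval (X ((m : ℕ) : Fin (m + 1)) : MvPolynomial (Fin (m + 1)) K))) h
  simp only [AlgHom.comp_apply] at h2
  show Polynomial.aeval _ _ = _
  rw [h2]
  have h3 : (fun i => Polynomial.aeval (X ((m : ℕ) : Fin (m + 1)) : MvPolynomial (Fin (m + 1)) K)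
      (![q, Polynomial.X] i)) = ![yPoly m q, X ((m : ℕ) : Fin (m + 1))] := by
    funext i; fin_cases i <;> simp [yPoly]
  rw [h3]

lemma yPoly_eq_sum (m : ℕ) (q : Polynomial K) :
    yPoly m q = q.sum fun e r => monomial (Finsupp.single ((m : ℕ) : Fin (m + 1)) e) r := by
  rw [yPoly, Polynomial.aeval_def, Polynomial.eval₂_eq_sum, Polynomial.sum_def,
    Polynomial.sum_def]
  refine Finset.sum_congr rfl fun e _ => ?_
  rw [MvPolynomial.algebraMap_eq, C_mul_X_pow_eq_monomial]

lemma mem_support_yPoly {m : ℕ} {q : Polynomial K} {b : Fin (m + 1) →₀ ℕ}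
    (hb : b ∈ (yPoly m q).support) :
    b = Finsupp.single ((m : ℕ) : Fin (m + 1)) (b ((m : ℕ) : Fin (m + 1))) := by
  rw [mem_support_iff, yPoly_eq_sum, Polynomial.sum_def, coeff_sum] at hb
  obtain ⟨e, _, he⟩ := Finset.exists_ne_zero_of_sum_ne_zero hb
  rw [coeff_monomial] at he
  by_cases hc : Finsupp.single ((m : ℕ) : Fin (m + 1)) e = b
  · rw [← hc, Finsupp.single_eq_same]
  · rw [if_neg hc] at he; exact absurd rfl he

lemma coeff_yPoly_single (m : ℕ) (q : Polynomial K) (e : ℕ) :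
    coeff (Finsupp.single ((m : ℕ) : Fin (m + 1)) e) (yPoly m q) = q.coeff e := by
  rw [yPoly_eq_sum, Polynomial.sum_def, coeff_sum]
  simp only [coeff_monomial, (Finsupp.single_injective ((m : ℕ) : Fin (m + 1))).eq_iff]
  rw [Finset.sum_ite_eq' q.support e (fun e' => q.coeff e')]
  by_cases he : e ∈ q.support
  · simp [he]
  · simp [he, Polynomial.notMem_support_iff.mp he]


/-- The Gröbner generators. -/
noncomputable def Gf {K : Type*} [Field K] (m : ℕ) (g : ℕ → MvPolynomial (Fin 2) K)
    (p c : K) : ℕ → MvPolynomial (Fin (m + 1)) K :=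
  fun k => if k < m then X ((k : ℕ) : Fin (m + 1)) - yPoly m (ghat g p k)
    else yPoly m (ghat g p m - Polynomial.C c)

variable {m : ℕ} {g : ℕ → MvPolynomial (Fin 2) K} {p c : K}

lemma yPoly_sub (m : ℕ) (q1 q2 : Polynomial K) :
    yPoly m (q1 - q2) = yPoly m q1 - yPoly m q2 := by
  simp [yPoly]

lemma keyedF_zero_add_Gf (hm : 1 ≤ m) : keyedF m g p c 0 + Gf m g p c 0 = 0 := by
  have h0m : 0 < m := hm
  simp only [keyedF, Gf, if_pos h0m, reduceIte]
  rw [ghat, yPoly_aeval, yPoly_C]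
  ring

lemma keyedF_succ_rec (k : ℕ) (hk : k + 1 ≤ m) :
    ∃ s, s ∈ Ideal.span {Gf m g p c k} ∧
      keyedF m g p c (k + 1)
        = (if k + 1 < m then -Gf m g p c (k + 1) else Gf m g p c (k + 1)) + s := by
  have hkm : k < m := lt_of_lt_of_le (Nat.lt_succ_self k) hk
  have hgh : yPoly m (ghat g p (k + 1))
      = aeval ![yPoly m (ghat g p k), X ((m : ℕ) : Fin (m + 1))] (g (k + 1)) := by
    rw [ghat, yPoly_aeval]
  refine ⟨aeval ![X ((k : ℕ) : Fin (m + 1)), X ((m : ℕ) : Fin (m + 1))] (g (k + 1))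
      - aeval ![yPoly m (ghat g p k), X ((m : ℕ) : Fin (m + 1))] (g (k + 1)), ?_, ?_⟩
  · have := aeval_pair_sub_mem (g (k + 1)) (X ((k : ℕ) : Fin (m + 1)))
      (yPoly m (ghat g p k)) (X ((m : ℕ) : Fin (m + 1)))
    rw [Gf, if_pos hkm]
    exact this
  · rw [keyedF, if_neg (Nat.succ_ne_zero k)]
    simp only [Nat.add_sub_cancel]
    by_cases h1 : k + 1 < m
    · simp only [Gf, if_pos h1]
      rw [hgh]
      ring
    · have hkm1 : k + 1 = m := le_antisymm hk (not_lt.mp h1)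
      subst hkm1
      simp only [Gf, if_neg h1]
      rw [yPoly_sub, yPoly_C, hgh]
      ring

lemma Gf_mem_spanF (hm : 1 ≤ m) : ∀ k, k ≤ m →
    Gf m g p c k ∈ Ideal.span (keyedF m g p c '' Set.Iic m) := by
  intro k
  induction k with
  | zero =>
    intro _
    have h0 : Gf m g p c 0 = -keyedF m g p c 0 := by
      have := keyedF_zero_add_Gf (g := g) (p := p) (c := c) hm; linear_combination this
    rw [h0]
    exact neg_mem (Ideal.subset_span ⟨0, Set.mem_Iic.mpr (Nat.zero_le m), rfl⟩)
  | succ k ih =>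
    intro hk1
    obtain ⟨s, hs, heq⟩ := keyedF_succ_rec (g := g) (p := p) (c := c) k hk1
    have hsF : s ∈ Ideal.span (keyedF m g p c '' Set.Iic m) :=
      (Ideal.span_singleton_le_iff_mem _).mpr (ih (le_of_lt hk1)) hs
    have hF : keyedF m g p c (k + 1) ∈ Ideal.span (keyedF m g p c '' Set.Iic m) :=
      Ideal.subset_span ⟨k + 1, Set.mem_Iic.mpr hk1, rfl⟩
    by_cases h1 : k + 1 < m
    · rw [if_pos h1] at heq
      have : Gf m g p c (k + 1) = s - keyedF m g p c (k + 1) := by linear_combination heq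
      rw [this]; exact sub_mem hsF hF
    · rw [if_neg h1] at heq
      have : Gf m g p c (k + 1) = keyedF m g p c (k + 1) - s := by linear_combination -heq
      rw [this]; exact sub_mem hF hsF

lemma keyedF_mem_spanG (hm : 1 ≤ m) : ∀ k, k ≤ m →
    keyedF m g p c k ∈ Ideal.span (Gf m g p c '' Set.Iic m) := by
  intro k
  induction k with
  | zero =>
    intro _
    have h0 : keyedF m g p c 0 = -Gf m g p c 0 := by
      have := keyedF_zero_add_Gf (g := g) (p := p) (c := c) hm; linear_combination this
    rw [h0]
    exact neg_mem (Ideal.subset_span ⟨0, Set.mem_Iic.mpr (Nat.zero_le m), rfl⟩)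
  | succ k _ =>
    intro hk1
    obtain ⟨s, hs, heq⟩ := keyedF_succ_rec (g := g) (p := p) (c := c) k hk1
    have hGk : Gf m g p c k ∈ Ideal.span (Gf m g p c '' Set.Iic m) :=
      Ideal.subset_span ⟨k, Set.mem_Iic.mpr (le_of_lt hk1), rfl⟩
    have hsG : s ∈ Ideal.span (Gf m g p c '' Set.Iic m) :=
      (Ideal.span_singleton_le_iff_mem _).mpr hGk hs
    have hGk1 : Gf m g p c (k + 1) ∈ Ideal.span (Gf m g p c '' Set.Iic m) :=
      Ideal.subset_span ⟨k + 1, Set.mem_Iic.mpr hk1, rfl⟩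
    rw [heq]
    by_cases h1 : k + 1 < m
    · rw [if_pos h1]; exact add_mem (neg_mem hGk1) hsG
    · rw [if_neg h1]; exact add_mem hGk1 hsG

lemma span_eq (hm : 1 ≤ m) :
    Ideal.span (keyedF m g p c '' Set.Iic m) = Ideal.span (Gf m g p c '' Set.Iic m) := by
  apply le_antisymm <;> rw [Ideal.span_le] <;> rintro x ⟨k, hk, rfl⟩
  · exact keyedF_mem_spanG hm k hk
  · exact Gf_mem_spanF hm k hk


variable {m : ℕ}

lemma yv_val : (((m : ℕ) : Fin (m + 1)) : ℕ) = m := Fin.val_cast_of_lt (Nat.lt_succ_self m)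

lemma kc_ne_yv {k : ℕ} (hk : k < m) : ((k : ℕ) : Fin (m + 1)) ≠ ((m : ℕ) : Fin (m + 1)) := by
  intro h
  have h1 : ((( k : ℕ) : Fin (m + 1)) : ℕ) = k := Fin.val_cast_of_lt (by omega)
  rw [h, yv_val] at h1
  omega

lemma ne_yv_lt {j : Fin (m + 1)} (hj : j ≠ ((m : ℕ) : Fin (m + 1))) : (j : ℕ) < m := by
  have := j.isLt
  rcases Nat.lt_or_ge (j : ℕ) m with h | h
  · exact h
  · exfalso; apply hj; apply Fin.ext; rw [yv_val]; omega

lemma leadMono_XsubY {k : ℕ} (hk : k < m) (q : Polynomial K) :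
    IsLeadMono (lexLT sigDes) (X ((k : ℕ) : Fin (m + 1)) - yPoly m q)
      (Finsupp.single ((k : ℕ) : Fin (m + 1)) 1) := by
  set kc : Fin (m + 1) := ((k : ℕ) : Fin (m + 1)) with hkc
  set yv : Fin (m + 1) := ((m : ℕ) : Fin (m + 1)) with hyv
  have hne : kc ≠ yv := kc_ne_yv hk
  have hcy : coeff (Finsupp.single kc 1) (yPoly m q) = 0 := by
    by_contra hc
    have hmem : Finsupp.single kc 1 ∈ (yPoly m q).support := mem_support_iff.mpr hc
    have := mem_support_yPoly hmem
    rw [Finsupp.single_eq_of_ne hne.symm, Finsupp.single_zero] at this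
    exact one_ne_zero (Finsupp.single_eq_zero.mp this)
  constructor
  · rw [mem_support_iff, coeff_sub, hcy, coeff_X', if_pos rfl]
    simp
  · intro b hb hbne
    have hb' : b ∈ (X kc : MvPolynomial (Fin (m + 1)) K).support ∪ (yPoly m q).support :=
      MvPolynomial.support_sub _ _ _ hb
    rw [support_X, Finset.mem_union, Finset.mem_singleton] at hb'
    have hby : b ∈ (yPoly m q).support := by
      rcases hb' with h | h
      · exact absurd h hbne
      · exact h
    have hbform := mem_support_yPoly hby
    refine ⟨kc, ?_, ?_⟩
    · rw [hbform, Finsupp.single_eq_of_ne hne, Finsupp.single_eq_same]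
      omega
    · intro j hj
      have hjk : j < kc := hj
      have hjy : j ≠ yv := by
        intro h
        have h2 : (j : ℕ) = m := by rw [h, yv_val]
        have h3 : (kc : ℕ) = k := Fin.val_cast_of_lt (by omega)
        have := (Fin.lt_iff_val_lt_val).mp hjk
        omega
      have hjkc : j ≠ kc := ne_of_lt hjk
      rw [hbform, Finsupp.single_eq_of_ne hjy, Finsupp.single_eq_of_ne hjkc]

lemma leadMono_yPoly (q : Polynomial K) (hq : q ≠ 0) :
    IsLeadMono (lexLT sigDes) (yPoly m q)
      (Finsupp.single ((m : ℕ) : Fin (m + 1)) q.natDegree) := by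
  set yv : Fin (m + 1) := ((m : ℕ) : Fin (m + 1)) with hyv
  constructor
  · rw [mem_support_iff, coeff_yPoly_single]
    exact fun h => hq (Polynomial.leadingCoeff_eq_zero.mp h)
  · intro b hb hbne
    have hbform := mem_support_yPoly hb
    set e : ℕ := b yv with he
    have hce : q.coeff e ≠ 0 := by
      rw [mem_support_iff, hbform, coeff_yPoly_single] at hb
      exact hb
    have hele : e ≤ q.natDegree := Polynomial.le_natDegree_of_ne_zero hce
    have hene : e ≠ q.natDegree := by
      intro h
      exact hbne (by rw [hbform, h])
    refine ⟨yv, ?_, ?_⟩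
    · rw [hbform, Finsupp.single_eq_same, Finsupp.single_eq_same]
      omega
    · intro j hj
      have hjy : j ≠ yv := ne_of_lt hj
      rw [hbform, Finsupp.single_eq_of_ne hjy, Finsupp.single_eq_of_ne hjy]

/-- The dehomogenization to `K[y]`. -/
noncomputable def phi (m : ℕ) (g : ℕ → MvPolynomial (Fin 2) K) (p : K) :
    MvPolynomial (Fin (m + 1)) K →ₐ[K] Polynomial K :=
  aeval fun i => if (i : ℕ) < m then ghat g p (i : ℕ) else Polynomial.X

variable {g : ℕ → MvPolynomial (Fin 2) K} {p : K}

lemma phi_X_yv : phi m g p (X ((m : ℕ) : Fin (m + 1))) = Polynomial.X := by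
  rw [phi, aeval_X, yv_val, if_neg (lt_irrefl m)]

lemma phi_X_lt {k : ℕ} (hk : k < m) : phi m g p (X ((k : ℕ) : Fin (m + 1))) = ghat g p k := by
  rw [phi, aeval_X, Fin.val_cast_of_lt (by omega : k < m + 1), if_pos hk]

lemma phi_yPoly (q : Polynomial K) : phi m g p (yPoly m q) = q := by
  rw [yPoly, ← Polynomial.aeval_algHom_apply, phi_X_yv, Polynomial.aeval_X_left_apply]

lemma yPoly_phi_of_pure {f : MvPolynomial (Fin (m + 1)) K}
    (hf : ∀ b ∈ f.support, b = Finsupp.single ((m : ℕ) : Fin (m + 1))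
      (b ((m : ℕ) : Fin (m + 1)))) :
    yPoly m (phi m g p f) = f := by
  have hcomp : yPoly m (phi m g p f)
      = ((Polynomial.aeval (X ((m : ℕ) : Fin (m + 1)) : MvPolynomial (Fin (m + 1)) K)).comp
          (phi m g p)) f := rfl
  rw [hcomp]
  conv_rhs => rw [← support_sum_monomial_coeff f]
  conv_lhs => rw [← support_sum_monomial_coeff f]
  rw [map_sum]
  refine Finset.sum_congr rfl fun b hb => ?_
  obtain ⟨e, hbe⟩ : ∃ e, b = Finsupp.single ((m : ℕ) : Fin (m + 1)) e := ⟨_, hf b hb⟩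
  subst hbe
  rw [← C_mul_X_pow_eq_monomial, map_mul, map_pow]
  have h1 : ((Polynomial.aeval (X ((m : ℕ) : Fin (m + 1)) : MvPolynomial (Fin (m + 1)) K)).comp
      (phi m g p)) (C (coeff (Finsupp.single ((m : ℕ) : Fin (m + 1)) e) f))
      = C (coeff (Finsupp.single ((m : ℕ) : Fin (m + 1)) e) f) := by
    rw [AlgHom.comp_apply, phi, aeval_C]
    simp [MvPolynomial.algebraMap_eq]
  have h2 : ((Polynomial.aeval (X ((m : ℕ) : Fin (m + 1)) : MvPolynomial (Fin (m + 1)) K)).comp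
      (phi m g p)) (X ((m : ℕ) : Fin (m + 1)))
      = X ((m : ℕ) : Fin (m + 1)) := by
    rw [AlgHom.comp_apply, phi_X_yv, Polynomial.aeval_X]
  rw [h1, h2, C_mul_X_pow_eq_monomial]


lemma phi_Gf_lt {k : ℕ} (hk : k < m) : phi m g p (Gf m g p c k) = 0 := by
  simp only [Gf, if_pos hk]
  rw [map_sub, phi_X_lt hk, phi_yPoly, sub_self]

lemma phi_Gf_last : phi m g p (Gf m g p c m) = ghat g p m - Polynomial.C c := by
  simp only [Gf, if_neg (lt_irrefl m)]
  exact phi_yPoly _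

lemma Gf_last_eq : Gf m g p c m = yPoly m (ghat g p m - Polynomial.C c) := by
  simp only [Gf, if_neg (lt_irrefl m)]

lemma mono_mem {f : MvPolynomial (Fin (m + 1)) K} {a : Fin (m + 1) →₀ ℕ}
    (hfI : f ∈ Ideal.span (Gf m g p c '' Set.Iic m)) (hf0 : f ≠ 0)
    (hlm : IsLeadMono (lexLT sigDes) f a) :
    monomial a (1 : K) ∈ Ideal.span {mf | ∃ g' ∈ Gf m g p c '' Set.Iic m, g' ≠ 0 ∧
      ∃ a', IsLeadMono (lexLT sigDes) g' a' ∧ mf = monomial a' (1 : K)} := by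
  set yv : Fin (m + 1) := ((m : ℕ) : Fin (m + 1)) with hyv
  by_cases hcase : ∃ j, j ≠ yv ∧ a j ≠ 0
  · obtain ⟨j, hj, haj⟩ := hcase
    have hk : (j : ℕ) < m := ne_yv_lt hj
    have hjc : (((j : ℕ) : ℕ) : Fin (m + 1)) = j := Fin.cast_val_eq_self j
    have hGkdef : Gf m g p c (j : ℕ)
        = X (((j : ℕ) : ℕ) : Fin (m + 1)) - yPoly m (ghat g p (j : ℕ)) := by
      simp only [Gf, if_pos hk]
    have hGklm : IsLeadMono (lexLT sigDes) (Gf m g p c (j : ℕ))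
        (Finsupp.single ((((j : ℕ)) : ℕ) : Fin (m + 1)) 1) := by
      rw [hGkdef]; exact leadMono_XsubY hk _
    have hGk0 : Gf m g p c (j : ℕ) ≠ 0 := by
      intro h
      have h1 := hGklm.1
      rw [h] at h1
      simp at h1
    have hgen : monomial (Finsupp.single j 1) (1 : K) ∈ Ideal.span {mf |
        ∃ g' ∈ Gf m g p c '' Set.Iic m, g' ≠ 0 ∧
        ∃ a', IsLeadMono (lexLT sigDes) g' a' ∧ mf = monomial a' (1 : K)} := by
      apply Ideal.subset_span
      exact ⟨Gf m g p c (j : ℕ), ⟨(j : ℕ), Set.mem_Iic.mpr (le_of_lt hk), rfl⟩,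
        hGk0, Finsupp.single ((((j : ℕ)) : ℕ) : Fin (m + 1)) 1, hGklm, by rw [hjc]⟩
    have hsplit : monomial a (1 : K)
        = monomial (Finsupp.single j 1) 1 * monomial (a - Finsupp.single j 1) 1 := by
      have hsum : Finsupp.single j 1 + (a - Finsupp.single j 1) = a := by
        ext i
        rw [Finsupp.add_apply, Finsupp.tsub_apply]
        by_cases hij : i = j
        · subst hij; rw [Finsupp.single_eq_same]
          have : 1 ≤ a i := Nat.one_le_iff_ne_zero.mpr haj
          omega
        · rw [Finsupp.single_eq_of_ne hij]
          omega
      rw [monomial_mul, one_mul, hsum]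
    rw [hsplit]
    exact Ideal.mul_mem_right _ _ hgen
  · push_neg at hcase
    have hpure : ∀ b ∈ f.support, b = Finsupp.single yv (b yv) := by
      intro b hb
      ext j
      by_cases hjy : j = yv
      · subst hjy; rw [Finsupp.single_eq_same]
      · rw [Finsupp.single_eq_of_ne hjy]
        by_contra hbj
        have hba : b ≠ a := by
          intro h
          exact hbj (by rw [h]; exact hcase j hjy)
        obtain ⟨i, hi, hall⟩ := hlm.2 b hb hba
        have hia : i = yv := by
          by_contra hiy
          rw [hcase i hiy] at hi
          exact Nat.not_lt_zero _ hi
        have hji : sigDes i j := by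
          show j < i
          rw [hia]
          rw [Fin.lt_iff_val_lt_val, hyv, yv_val]
          exact ne_yv_lt hjy
        have := hall j hji
        rw [hcase j hjy] at this
        exact hbj this
    have hfy : yPoly m (phi m g p f) = f := yPoly_phi_of_pure hpure
    set Q : Polynomial K := phi m g p f with hQ
    have hmap : Q ∈ Ideal.span {ghat g p m - Polynomial.C c} := by
      have h1 : Q ∈ Ideal.map (phi m g p) (Ideal.span (Gf m g p c '' Set.Iic m)) :=
        Ideal.mem_map_of_mem _ hfI
      rw [Ideal.map_span] at h1
      refine Ideal.span_le.mpr ?_ h1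
      rintro x ⟨y, ⟨k, hk, rfl⟩, rfl⟩
      by_cases hkm : k < m
      · show phi m g p (Gf m g p c k) ∈ _
        rw [phi_Gf_lt hkm]
        exact zero_mem _
      · have hEq : Gf m g p c k = Gf m g p c m := by
          rw [le_antisymm hk (not_lt.mp hkm)]
        show phi m g p (Gf m g p c k) ∈ _
        rw [hEq, phi_Gf_last]
        exact Ideal.subset_span rfl
    have hdvd : (ghat g p m - Polynomial.C c) ∣ Q := Ideal.mem_span_singleton.mp hmap
    have hQ0 : Q ≠ 0 := fun h => hf0 (by rw [← hfy, h]; exact map_zero (Polynomial.aeval _))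
    have hg0 : ghat g p m - Polynomial.C c ≠ 0 := by
      intro h
      rw [h] at hdvd
      exact hQ0 (zero_dvd_iff.mp hdvd)
    have hdeg : (ghat g p m - Polynomial.C c).natDegree ≤ Q.natDegree :=
      Polynomial.natDegree_le_of_dvd hdvd hQ0
    have ha_eq : a = Finsupp.single yv Q.natDegree := by
      have haf := hlm.1
      have hae : a = Finsupp.single yv (a yv) := hpure a haf
      have hcoef : Q.coeff (a yv) ≠ 0 := by
        rw [mem_support_iff, ← hfy, hae, coeff_yPoly_single] at haf
        exact haf
      have hle : a yv ≤ Q.natDegree := Polynomial.le_natDegree_of_ne_zero hcoef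
      have hDmem : Finsupp.single yv Q.natDegree ∈ f.support := by
        rw [mem_support_iff, ← hfy, coeff_yPoly_single]
        exact fun h => hQ0 (Polynomial.leadingCoeff_eq_zero.mp h)
      by_cases hda : Finsupp.single yv Q.natDegree = a
      · exact hda.symm
      · obtain ⟨i, hi, _⟩ := hlm.2 _ hDmem hda
        have hia : i = yv := by
          by_contra hiy
          rw [hcase i hiy] at hi
          exact Nat.not_lt_zero _ hi
        rw [hia, Finsupp.single_eq_same] at hi
        rw [hae] at hi
        rw [Finsupp.single_eq_same] at hi
        omega
    have hGm0 : Gf m g p c m ≠ 0 := by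
      intro h
      apply hg0
      rw [← phi_yPoly (m := m) (g := g) (p := p) (ghat g p m - Polynomial.C c), ← Gf_last_eq,
        h, map_zero]
    have hlmG : IsLeadMono (lexLT sigDes) (Gf m g p c m)
        (Finsupp.single yv (ghat g p m - Polynomial.C c).natDegree) := by
      rw [Gf_last_eq]
      exact leadMono_yPoly _ hg0
    have hgen : monomial (Finsupp.single yv (ghat g p m - Polynomial.C c).natDegree) (1 : K)
        ∈ Ideal.span {mf | ∃ g' ∈ Gf m g p c '' Set.Iic m, g' ≠ 0 ∧
        ∃ a', IsLeadMono (lexLT sigDes) g' a' ∧ mf = monomial a' (1 : K)} := by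
      apply Ideal.subset_span
      exact ⟨Gf m g p c m, ⟨m, Set.mem_Iic.mpr (le_refl m), rfl⟩, hGm0, _, hlmG, rfl⟩
    have hsplit : monomial a (1 : K)
        = monomial (Finsupp.single yv (ghat g p m - Polynomial.C c).natDegree) 1
          * monomial (Finsupp.single yv
              (Q.natDegree - (ghat g p m - Polynomial.C c).natDegree)) 1 := by
      have hadd : (ghat g p m - Polynomial.C c).natDegree
          + (Q.natDegree - (ghat g p m - Polynomial.C c).natDegree) = Q.natDegree := by
        omega
      rw [monomial_mul, one_mul, ← Finsupp.single_add, hadd, ← ha_eq]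
    rw [hsplit]
    exact Ideal.mul_mem_right _ _ hgen


end KIPS

/-- (`n = m + 1 ≥ 2`.) The polynomials
`x_1 - ĝ_1, …, x_{n-1} - ĝ_{n-1}, ĝ_n` generate the same ideal as the univariate keyed iterated
polynomial system and form a Gröbner basis of it with respect to the lexicographic order
`x_1 > ⋯ > x_{n-1} > y`. -/
theorem stmt_6 {K : Type*} [Field K] (m : ℕ) (hm : 1 ≤ m)
    (g : ℕ → MvPolynomial (Fin 2) K) (p c : K)
    (hgnc : ∀ k ≤ m, 0 < (g k).totalDegree)
    (hzero : ∃ z : Fin (m + 1) → K, ∀ k ≤ m, eval z (keyedF m g p c k) = 0) :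
    Ideal.span ((keyedF m g p c) '' Set.Iic m)
        = Ideal.span ((fun k => if k < m then X ((k : ℕ) : Fin (m + 1)) - yPoly m (ghat g p k)
            else yPoly m (ghat g p m - Polynomial.C c)) '' Set.Iic m)
      ∧ IsGroebner (lexLT sigDes)
          ((fun k => if k < m then X ((k : ℕ) : Fin (m + 1)) - yPoly m (ghat g p k)
            else yPoly m (ghat g p m - Polynomial.C c)) '' Set.Iic m)
          (Ideal.span ((keyedF m g p c) '' Set.Iic m)) := by
  have hGfun : (fun k => if k < m then X ((k : ℕ) : Fin (m + 1)) - yPoly m (ghat g p k)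
      else yPoly m (ghat g p m - Polynomial.C c)) = KIPS.Gf m g p c := rfl
  rw [hGfun]
  have hspan := KIPS.span_eq (m := m) (g := g) (p := p) (c := c) hm
  refine ⟨hspan, ?_, ?_⟩
  · rintro x ⟨k, hk, rfl⟩
    exact KIPS.Gf_mem_spanF hm k (Set.mem_Iic.mp hk)
  · apply le_antisymm
    · rw [initialIdeal]
      apply Ideal.span_le.mpr
      rintro mf ⟨g', ⟨k, hk, rfl⟩, hne, a, hlma, rfl⟩
      exact Ideal.subset_span
        ⟨KIPS.Gf m g p c k, KIPS.Gf_mem_spanF hm k (Set.mem_Iic.mp hk), hne, a, hlma, rfl⟩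
    · rw [initialIdeal]
      apply Ideal.span_le.mpr
      rintro mf ⟨f, hfI, hf0, a, hlma, rfl⟩
      rw [hspan] at hfI
      exact KIPS.mono_mem hfI hf0 hlma
end

section
/- Let F_q be a finite field with q elements, let n ≥ 2, and let f_1,…,f_n ∈ F_q[x_1,…,x_{n−1},y] be a univariate keyed iterated polynomial system built from g_1,…,g_n ∈ F_q[x,y] and p, c ∈ F_q, with I = (f_1,…,f_n). Define ĝ_1 = g_1(p,y), ĝ_i = g_i(ĝ_{i−1}(y), y) for 2 ≤ i ≤ n−1, and ĝ_n = g_n(ĝ_{n−1}(y), y) − c in F_q[y]. Then I + (y^q − y) = (x_1 − ĝ_1, …, x_{n−1} − ĝ_{n−1}, gcd(ĝ_n, y^q − y)), this ideal is a radical ideal, and moreover I + (y^q − y) = I + (x_1^q − x_1, …, x_{n−1}^q − x_{n−1}, y^q − y). -/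
open MvPolynomial
open Fin.NatCast

section Stmt7Aux
variable {K : Type*} [Field K]

variable {K : Type*} [Field K]

lemma mv_aeval_sub_mem {σ R : Type*} [CommRing R] [Algebra K R] (I : Ideal R)
    (v w : σ → R) (h : ∀ i, v i - w i ∈ I) (f : MvPolynomial σ K) :
    aeval v f - aeval w f ∈ I := by
  have hext : (Ideal.Quotient.mkₐ K I).comp (aeval v)
      = (Ideal.Quotient.mkₐ K I).comp (aeval w) := by
    apply MvPolynomial.algHom_ext
    intro i
    simp only [AlgHom.comp_apply, aeval_X, Ideal.Quotient.mkₐ_eq_mk]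
    exact (Ideal.Quotient.mk_eq_mk_iff_sub_mem _ _).mpr (h i)
  have := congrArg (fun φ => φ f) hext
  simpa [Ideal.Quotient.mkₐ_eq_mk, Ideal.Quotient.eq_zero_iff_mem] using
    (Ideal.Quotient.mk_eq_mk_iff_sub_mem _ _).mp this

lemma poly_aeval_sub_mem {R : Type*} [CommRing R] [Algebra K R] (I : Ideal R)
    (a b : R) (h : a - b ∈ I) (f : Polynomial K) :
    Polynomial.aeval a f - Polynomial.aeval b f ∈ I := by
  have hext : (Ideal.Quotient.mkₐ K I).comp (Polynomial.aeval a)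
      = (Ideal.Quotient.mkₐ K I).comp (Polynomial.aeval b) := by
    apply Polynomial.algHom_ext
    simp only [AlgHom.comp_apply, Polynomial.aeval_X, Ideal.Quotient.mkₐ_eq_mk]
    exact (Ideal.Quotient.mk_eq_mk_iff_sub_mem _ _).mpr h
  have := congrArg (fun φ => φ f) hext
  simpa [Ideal.Quotient.mkₐ_eq_mk, Ideal.Quotient.eq_zero_iff_mem] using
    (Ideal.Quotient.mk_eq_mk_iff_sub_mem _ _).mp this

lemma mv_self_sub_algHom_mem {σ : Type*} (I : Ideal (MvPolynomial σ K))
    (φ : MvPolynomial σ K →ₐ[K] MvPolynomial σ K)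
    (h : ∀ i, X i - φ (X i) ∈ I) (f : MvPolynomial σ K) : f - φ f ∈ I := by
  have h1 : f = aeval X f := (MvPolynomial.aeval_X_left_apply f).symm
  have h2 : φ f = aeval (fun i => φ (X i)) f := by
    conv_lhs => rw [MvPolynomial.aeval_unique φ]
    rfl
  rw [h2]
  nth_rewrite 1 [h1]
  exact mv_aeval_sub_mem I _ _ (fun i => h i) f


lemma yPoly_aeval2 (m : ℕ) (u v : Polynomial K) (G : MvPolynomial (Fin 2) K) :
    yPoly m (aeval ![u, v] G) = aeval ![yPoly m u, yPoly m v] G := by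
  show Polynomial.aeval _ (aeval ![u, v] G) = _
  rw [show (Polynomial.aeval (X ((m : ℕ) : Fin (m + 1)) : MvPolynomial (Fin (m+1)) K))
        ((aeval ![u, v]) G)
      = ((Polynomial.aeval (X ((m : ℕ) : Fin (m + 1)) : MvPolynomial (Fin (m+1)) K)).comp
        (aeval ![u, v])) G from rfl, MvPolynomial.comp_aeval]
  have hfun : (fun i => (Polynomial.aeval (X ((m : ℕ) : Fin (m + 1)) :
      MvPolynomial (Fin (m+1)) K)) (![u, v] i)) = ![yPoly m u, yPoly m v] := by
    funext i; fin_cases i <;> rfl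
  rw [hfun]

lemma yPoly_C (m : ℕ) (a : K) : yPoly m (Polynomial.C a) = C a := by
  show Polynomial.aeval _ (Polynomial.C a) = _
  rw [Polynomial.aeval_C]; rfl

lemma yPoly_X (m : ℕ) : yPoly (K := K) m Polynomial.X = X ((m : ℕ) : Fin (m + 1)) := by
  show Polynomial.aeval _ Polynomial.X = _
  rw [Polynomial.aeval_X]

lemma ghat_eq (g : ℕ → MvPolynomial (Fin 2) K) (p : K) (k : ℕ) (hk : 1 ≤ k) :
    ghat g p k = aeval ![ghat g p (k - 1), Polynomial.X] (g k) := by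
  cases k with
  | zero => omega
  | succ k => rfl

end Stmt7Aux

/-- (`n = m + 1 ≥ 2`, `q = |K|`.) Adding the field equation `y^q - y` to a
univariate keyed iterated polynomial system yields the ideal generated by
`x_1 - ĝ_1, …, x_{n-1} - ĝ_{n-1}, gcd(ĝ_n, y^q - y)`; this ideal is radical and coincides with
the ideal obtained by adding all field equations. -/
theorem stmt_7 {K : Type*} [Field K] [Fintype K] (m : ℕ) (hm : 1 ≤ m)
    (g : ℕ → MvPolynomial (Fin 2) K) (p c : K)
    (hgnc : ∀ k ≤ m, 0 < (g k).totalDegree)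
    (hzero : ∃ z : Fin (m + 1) → K, ∀ k ≤ m, eval z (keyedF m g p c k) = 0) :
    (Ideal.span ((keyedF m g p c) '' Set.Iic m)
        + Ideal.span {X ((m : ℕ) : Fin (m + 1)) ^ Fintype.card K
            - (X ((m : ℕ) : Fin (m + 1)) : MvPolynomial (Fin (m + 1)) K)}
      = Ideal.span ((fun k => if k < m then X ((k : ℕ) : Fin (m + 1)) - yPoly m (ghat g p k)
          else yPoly m (polyGCD (ghat g p m - Polynomial.C c)
            (Polynomial.X ^ Fintype.card K - Polynomial.X))) '' Set.Iic m))
    ∧ (Ideal.span ((keyedF m g p c) '' Set.Iic m)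
        + Ideal.span {X ((m : ℕ) : Fin (m + 1)) ^ Fintype.card K
            - (X ((m : ℕ) : Fin (m + 1)) : MvPolynomial (Fin (m + 1)) K)}).IsRadical
    ∧ Ideal.span ((keyedF m g p c) '' Set.Iic m)
        + Ideal.span {X ((m : ℕ) : Fin (m + 1)) ^ Fintype.card K
            - (X ((m : ℕ) : Fin (m + 1)) : MvPolynomial (Fin (m + 1)) K)}
      = Ideal.span ((keyedF m g p c) '' Set.Iic m)
        + Ideal.span (Set.range fun j : Fin (m + 1) =>
            X j ^ Fintype.card K - (X j : MvPolynomial (Fin (m + 1)) K)) := by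
  classical
  have hm1 : (0:ℕ) < m := hm
  set q := Fintype.card K with hq
  have hq1 : 1 < q := Fintype.one_lt_card
  -- notations
  set t : MvPolynomial (Fin (m+1)) K := X ((m : ℕ) : Fin (m + 1)) with ht
  set S : Ideal (MvPolynomial (Fin (m+1)) K) :=
    Ideal.span ((keyedF m g p c) '' Set.Iic m) with hSdef
  set d : Polynomial K := polyGCD (ghat g p m - Polynomial.C c)
    (Polynomial.X ^ q - Polynomial.X) with hddef
  set J : Ideal (MvPolynomial (Fin (m+1)) K) :=
    Ideal.span ((fun k => if k < m then X ((k : ℕ) : Fin (m + 1)) - yPoly m (ghat g p k)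
      else yPoly m d) '' Set.Iic m) with hJdef
  have hcast : ∀ k : ℕ, k ≤ m → (((k : ℕ) : Fin (m+1)) : ℕ) = k :=
    fun k hk => Fin.val_cast_of_lt (by omega)
  have hlast : ((m : ℕ) : Fin (m + 1)) = Fin.last m := by
    apply Fin.ext
    rw [hcast m le_rfl, Fin.val_last]
  -- keyedF unfolded
  have hF0 : keyedF m g p c 0
      = aeval ![C p, t] (g 0) - X ((0 : ℕ) : Fin (m+1)) := by
    unfold keyedF
    rw [if_pos rfl, if_pos hm1]
  have hFk : ∀ k : ℕ, 1 ≤ k → k < m → keyedF m g p c k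
      = aeval ![X (((k-1 : ℕ)) : Fin (m+1)), t] (g k) - X ((k : ℕ) : Fin (m+1)) := by
    intro k h1 h2
    unfold keyedF
    rw [if_neg (show ¬ k = 0 by omega), if_pos h2]
  have hFm : keyedF m g p c m
      = aeval ![X (((m-1 : ℕ)) : Fin (m+1)), t] (g m) - C c := by
    unfold keyedF
    rw [if_neg (show ¬ m = 0 by omega), if_neg (lt_irrefl m)]
  -- yPoly-ghat recursion
  have hyg0 : yPoly m (ghat g p 0) = aeval ![C p, t] (g 0) := by
    show yPoly m (aeval ![Polynomial.C p, Polynomial.X] (g 0)) = _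
    rw [yPoly_aeval2, yPoly_C, yPoly_X]
  have hygs : ∀ k : ℕ, 1 ≤ k → yPoly m (ghat g p k)
      = aeval ![yPoly m (ghat g p (k-1)), t] (g k) := by
    intro k hk
    rw [ghat_eq g p k hk, yPoly_aeval2, yPoly_X]
  have hmemS : ∀ k, k ≤ m → keyedF m g p c k ∈ S :=
    fun k hk => Ideal.subset_span ⟨k, Set.mem_Iic.mpr hk, rfl⟩
  -- x_k - ghat_k lies in S
  have hX : ∀ k : ℕ, k < m → X ((k : ℕ) : Fin (m+1)) - yPoly m (ghat g p k) ∈ S := by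
    intro k
    induction k with
    | zero =>
      intro _
      have h0 := S.neg_mem (hmemS 0 (Nat.zero_le m))
      rw [hF0, neg_sub] at h0
      rw [hyg0]
      exact h0
    | succ k ih =>
      intro hk
      have hkm : k < m := by omega
      have hXk := ih hkm
      have hFks := hmemS (k+1) (by omega)
      rw [hFk (k+1) (by omega) hk] at hFks
      have hdiff : aeval ![X ((k : ℕ) : Fin (m+1)), t] (g (k+1))
          - aeval ![yPoly m (ghat g p k), t] (g (k+1)) ∈ S := by
        refine mv_aeval_sub_mem S _ _ ?_ (g (k+1))
        intro i
        fin_cases i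
        · simpa using hXk
        · simp
      have heq : X (((k+1 : ℕ)) : Fin (m+1)) - yPoly m (ghat g p (k+1))
          = -(aeval ![X (((k+1-1 : ℕ)) : Fin (m+1)), t] (g (k+1))
              - X (((k+1 : ℕ)) : Fin (m+1)))
            + (aeval ![X ((k : ℕ) : Fin (m+1)), t] (g (k+1))
              - aeval ![yPoly m (ghat g p k), t] (g (k+1))) := by
        rw [hygs (k+1) (by omega), Nat.add_sub_cancel]
        ring
      rw [heq]
      exact add_mem (S.neg_mem hFks) hdiff
  have hdiffm : aeval ![X (((m-1 : ℕ)) : Fin (m+1)), t] (g m)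
      - aeval ![yPoly m (ghat g p (m-1)), t] (g m) ∈ S := by
    refine mv_aeval_sub_mem S _ _ ?_ (g m)
    intro i
    fin_cases i
    · simpa using hX (m-1) (by omega)
    · simp
  -- yPoly (ghat m) - C c lies in S
  have hGm : yPoly m (ghat g p m) - C c ∈ S := by
    have hFms := hmemS m le_rfl
    rw [hFm] at hFms
    have heq : yPoly m (ghat g p m) - C c
        = (aeval ![X (((m-1 : ℕ)) : Fin (m+1)), t] (g m) - C c)
          - (aeval ![X (((m-1 : ℕ)) : Fin (m+1)), t] (g m)
            - aeval ![yPoly m (ghat g p (m-1)), t] (g m)) := by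
      rw [hygs m hm]; ring
    rw [heq]
    exact sub_mem hFms hdiffm
  -- gcd facts
  have hdl : d ∣ ghat g p m - Polynomial.C c :=
    @EuclideanDomain.gcd_dvd_left _ _ (Classical.decEq _) _ _
  have hdr : d ∣ Polynomial.X ^ q - Polynomial.X :=
    @EuclideanDomain.gcd_dvd_right _ _ (Classical.decEq _) _ _
  have hbez : d = (ghat g p m - Polynomial.C c)
        * @EuclideanDomain.gcdA _ _ (Classical.decEq _) (ghat g p m - Polynomial.C c)
            (Polynomial.X ^ q - Polynomial.X)
      + (Polynomial.X ^ q - Polynomial.X)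
        * @EuclideanDomain.gcdB _ _ (Classical.decEq _) (ghat g p m - Polynomial.C c)
            (Polynomial.X ^ q - Polynomial.X) :=
    @EuclideanDomain.gcd_eq_gcd_ab _ _ (Classical.decEq _) _ _
  have hTy : t ^ q - t = yPoly m (Polynomial.X ^ q - Polynomial.X) := by
    rw [show yPoly m (Polynomial.X ^ q - Polynomial.X)
        = Polynomial.aeval t (Polynomial.X ^ q - Polynomial.X) from rfl,
      map_sub, map_pow, Polynomial.aeval_X]
  -- generators of J
  have hDJ : yPoly m d ∈ J :=
    Ideal.subset_span ⟨m, Set.mem_Iic.mpr le_rfl, by simp⟩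
  have hGenJ : ∀ k : ℕ, k < m → X ((k : ℕ) : Fin (m+1)) - yPoly m (ghat g p k) ∈ J :=
    fun k hk => Ideal.subset_span ⟨k, Set.mem_Iic.mpr (le_of_lt hk), by simp [hk]⟩
  -- Part 1
  have part1 : S + Ideal.span {t ^ q - t} = J := by
    apply le_antisymm
    · rw [Submodule.add_eq_sup, sup_le_iff]
      constructor
      · rw [hSdef, Ideal.span_le]
        rintro f ⟨k, hk, rfl⟩
        have hk' : k ≤ m := Set.mem_Iic.mp hk
        show keyedF m g p c k ∈ J
        rcases Nat.lt_or_ge k m with hkm | hkm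
        · rcases Nat.eq_zero_or_pos k with rfl | hk0
          · rw [hF0, ← hyg0]
            have := J.neg_mem (hGenJ 0 hm1)
            rwa [neg_sub] at this
          · rw [hFk k hk0 hkm]
            have hdiff : aeval ![X (((k-1 : ℕ)) : Fin (m+1)), t] (g k)
                - aeval ![yPoly m (ghat g p (k-1)), t] (g k) ∈ J := by
              refine mv_aeval_sub_mem J _ _ ?_ (g k)
              intro i
              fin_cases i
              · simpa using hGenJ (k-1) (by omega)
              · simp
            have heq : aeval ![X (((k-1 : ℕ)) : Fin (m+1)), t] (g k)
                - X ((k : ℕ) : Fin (m+1))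
                = -(X ((k : ℕ) : Fin (m+1)) - yPoly m (ghat g p k))
                  + (aeval ![X (((k-1 : ℕ)) : Fin (m+1)), t] (g k)
                    - aeval ![yPoly m (ghat g p (k-1)), t] (g k)) := by
              rw [hygs k hk0]; ring
            rw [heq]
            exact add_mem (J.neg_mem (hGenJ k hkm)) hdiff
        · have hkm' : k = m := le_antisymm hk' hkm
          rw [hkm', hFm]
          have hdiff : aeval ![X (((m-1 : ℕ)) : Fin (m+1)), t] (g m)
              - aeval ![yPoly m (ghat g p (m-1)), t] (g m) ∈ J := by
            refine mv_aeval_sub_mem J _ _ ?_ (g m)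
            intro i
            fin_cases i
            · simpa using hGenJ (m-1) (by omega)
            · simp
          have hmem2 : yPoly m (ghat g p m) - C c ∈ J := by
            obtain ⟨e, he⟩ := hdl
            have : yPoly m (ghat g p m) - C c = yPoly m d * yPoly m e := by
              rw [show yPoly m d * yPoly m e
                  = Polynomial.aeval t d * Polynomial.aeval t e from rfl, ← map_mul, ← he,
                show Polynomial.aeval t (ghat g p m - Polynomial.C c)
                  = yPoly m (ghat g p m - Polynomial.C c) from rfl,
                show yPoly m (ghat g p m - Polynomial.C c)
                  = Polynomial.aeval t (ghat g p m - Polynomial.C c) from rfl,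
                map_sub, Polynomial.aeval_C]
              rfl
            rw [this]
            exact Ideal.mul_mem_right _ _ hDJ
          have heq : aeval ![X (((m-1 : ℕ)) : Fin (m+1)), t] (g m) - C c
              = (yPoly m (ghat g p m) - C c)
                + (aeval ![X (((m-1 : ℕ)) : Fin (m+1)), t] (g m)
                  - aeval ![yPoly m (ghat g p (m-1)), t] (g m)) := by
            rw [hygs m hm]; ring
          rw [heq]
          exact add_mem hmem2 hdiff
      · rw [Ideal.span_le]
        rintro f rfl
        show t ^ q - t ∈ J
        obtain ⟨e, he⟩ := hdr
        rw [hTy, show yPoly m (Polynomial.X ^ q - Polynomial.X)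
            = Polynomial.aeval t (Polynomial.X ^ q - Polynomial.X) from rfl, he, map_mul]
        exact Ideal.mul_mem_right _ _ hDJ
    · rw [hJdef, Ideal.span_le]
      rintro f ⟨k, hk, rfl⟩
      have hk' : k ≤ m := Set.mem_Iic.mp hk
      rw [Submodule.add_eq_sup]
      by_cases hkm : k < m
      · simp only [hkm, if_true]
        exact Ideal.mem_sup_left (hX k hkm)
      · simp only [hkm, if_false]
        have hmem1 : yPoly m (ghat g p m - Polynomial.C c) ∈ S := by
          rw [show yPoly m (ghat g p m - Polynomial.C c)
              = Polynomial.aeval t (ghat g p m - Polynomial.C c) from rfl, map_sub,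
            Polynomial.aeval_C]
          exact hGm
        have : yPoly m d
            = yPoly m (ghat g p m - Polynomial.C c)
              * yPoly m (@EuclideanDomain.gcdA _ _ (Classical.decEq _)
                  (ghat g p m - Polynomial.C c) (Polynomial.X ^ q - Polynomial.X))
              + (t ^ q - t)
              * yPoly m (@EuclideanDomain.gcdB _ _ (Classical.decEq _)
                  (ghat g p m - Polynomial.C c) (Polynomial.X ^ q - Polynomial.X)) := by
          rw [hTy]
          rw [show ∀ u v : Polynomial K, yPoly m u * yPoly m v
              = Polynomial.aeval t (u * v) from fun u v => (map_mul _ _ _).symm,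
            show ∀ u v : Polynomial K, yPoly m u * yPoly m v
              = Polynomial.aeval t (u * v) from fun u v => (map_mul _ _ _).symm]
          rw [show yPoly m d = Polynomial.aeval t d from rfl, ← map_add]
          exact congrArg _ hbez
        rw [this]
        exact add_mem
          (Ideal.mem_sup_left (Ideal.mul_mem_right _ _ hmem1))
          (Ideal.mem_sup_right (Ideal.mul_mem_right _ _ (Ideal.subset_span rfl)))
  refine ⟨part1, ?_, ?_⟩
  · -- radicality
    rw [part1]
    set Ψ : MvPolynomial (Fin (m+1)) K →ₐ[K] Polynomial K :=
      aeval (fun j : Fin (m+1) => if (j : ℕ) < m then ghat g p (j : ℕ) else Polynomial.X)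
      with hΨdef
    have hΨt : Ψ t = Polynomial.X := by
      rw [ht, hΨdef, aeval_X, hcast m le_rfl]
      simp
    have hΨy : ∀ h : Polynomial K, Ψ (yPoly m h) = h := by
      intro h
      show Ψ (Polynomial.aeval t h) = h
      rw [← Polynomial.aeval_algHom_apply Ψ t h, hΨt, Polynomial.aeval_X_left_apply]
    have hΨXk : ∀ k : ℕ, k < m → Ψ (X ((k : ℕ) : Fin (m+1))) = ghat g p k := by
      intro k hk
      rw [hΨdef, aeval_X, hcast k (le_of_lt hk)]
      simp [hk]
    -- J as a preimage
    have hJcom : J = Ideal.comap Ψ.toRingHom (Ideal.span {d}) := by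
      apply le_antisymm
      · rw [hJdef, Ideal.span_le]
        rintro f ⟨k, hk, rfl⟩
        have hk' : k ≤ m := Set.mem_Iic.mp hk
        rw [SetLike.mem_coe, Ideal.mem_comap]
        by_cases hkm : k < m
        · simp only [hkm, if_true]
          rw [show Ψ.toRingHom (X ((k : ℕ) : Fin (m+1)) - yPoly m (ghat g p k))
              = Ψ (X ((k : ℕ) : Fin (m+1))) - Ψ (yPoly m (ghat g p k)) from map_sub _ _ _,
            hΨXk k hkm, hΨy, sub_self]
          exact zero_mem _
        · simp only [hkm, if_false]
          rw [show Ψ.toRingHom (yPoly m d) = Ψ (yPoly m d) from rfl, hΨy]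
          exact Ideal.subset_span rfl
      · intro f hf
        rw [Ideal.mem_comap] at hf
        obtain ⟨e, he⟩ := Ideal.mem_span_singleton.mp hf
        have he' : Ψ f = d * e := he
        set φ : MvPolynomial (Fin (m+1)) K →ₐ[K] MvPolynomial (Fin (m+1)) K :=
          (Polynomial.aeval t).comp Ψ with hφdef
        have h1 : f - φ f ∈ J := by
          refine mv_self_sub_algHom_mem J φ ?_ f
          intro i
          by_cases him : (i : ℕ) < m
          · have : φ (X i) = yPoly m (ghat g p (i : ℕ)) := by
              rw [hφdef, AlgHom.comp_apply,
                show Ψ (X i) = Ψ (X (((i : ℕ) : ℕ) : Fin (m+1))) by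
                  rw [Fin.cast_val_eq_self],
                hΨXk (i : ℕ) him]
              rfl
            rw [this, show X i = X (((i : ℕ) : ℕ) : Fin (m+1)) by rw [Fin.cast_val_eq_self]]
            exact hGenJ (i : ℕ) him
          · have him' : (i : ℕ) = m := by omega
            have hieq : i = ((m : ℕ) : Fin (m+1)) := by
              apply Fin.ext
              rw [hcast m le_rfl, him']
            have : φ (X i) = X i := by
              rw [hφdef, AlgHom.comp_apply, hΨdef, aeval_X]
              simp only [him', lt_irrefl, if_false]
              rw [Polynomial.aeval_X, ht, hieq]
            rw [this, sub_self]
            exact zero_mem _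
        have h2 : φ f ∈ J := by
          have : φ f = yPoly m d * yPoly m e := by
            rw [hφdef, AlgHom.comp_apply, he',
              show Polynomial.aeval t (d * e) = yPoly m (d * e) from rfl,
              show yPoly m (d * e) = Polynomial.aeval t (d * e) from rfl, map_mul]
            rfl
          rw [this]
          exact Ideal.mul_mem_right _ _ hDJ
        have : f = (f - φ f) + φ f := by ring
        rw [this]
        exact add_mem h1 h2
    rw [hJcom]
    refine Ideal.IsRadical.comap _ ?_
    have hsep : (Polynomial.X ^ q - Polynomial.X : Polynomial K).Separable := by
      rw [Polynomial.separable_def]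
      convert isCoprime_one_right.neg_right using 1
      · rfl
      rw [Polynomial.derivative_sub, Polynomial.derivative_X, Polynomial.derivative_X_pow,
        hq, Nat.cast_card_eq_zero K, Polynomial.C_0, zero_mul, zero_sub]
    have hsq : Squarefree d := (hsep.squarefree).squarefree_of_dvd hdr
    exact isRadical_iff_span_singleton.mp hsq.isRadical
  · -- all field equations
    apply le_antisymm
    · rw [Submodule.add_eq_sup, Submodule.add_eq_sup, sup_le_iff]
      refine ⟨le_sup_left, le_trans ?_ le_sup_right⟩
      rw [Ideal.span_le]
      rintro f rfl
      exact Ideal.subset_span ⟨((m : ℕ) : Fin (m+1)), rfl⟩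
    · rw [Submodule.add_eq_sup, Submodule.add_eq_sup, sup_le_iff]
      refine ⟨le_sup_left, ?_⟩
      rw [Ideal.span_le]
      rintro f ⟨j, rfl⟩
      show X j ^ q - X j ∈ S ⊔ Ideal.span {t ^ q - t}
      by_cases hj : (j : ℕ) < m
      · have hXj : X j - yPoly m (ghat g p (j : ℕ)) ∈ S := by
          rw [show X j = X (((j : ℕ) : ℕ) : Fin (m+1)) by rw [Fin.cast_val_eq_self]]
          exact hX (j : ℕ) hj
        have h2 : X j ^ q - yPoly m (ghat g p (j : ℕ)) ^ q ∈ S := by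
          obtain ⟨e, he⟩ := sub_dvd_pow_sub_pow (X j) (yPoly m (ghat g p (j : ℕ))) q
          rw [he]
          exact Ideal.mul_mem_right _ _ hXj
        have hhq : Polynomial.aeval (t ^ q) (ghat g p (j : ℕ))
            = yPoly m (ghat g p (j : ℕ)) ^ q := by
          calc Polynomial.aeval (t ^ q) (ghat g p (j : ℕ))
              = Polynomial.aeval t (Polynomial.expand K q (ghat g p (j : ℕ))) :=
                (Polynomial.expand_aeval q (ghat g p (j : ℕ)) t).symm
            _ = Polynomial.aeval t (ghat g p (j : ℕ) ^ q) := by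
                rw [hq, FiniteField.expand_card]
            _ = yPoly m (ghat g p (j : ℕ)) ^ q := map_pow _ _ _
        have h3 : yPoly m (ghat g p (j : ℕ)) ^ q - yPoly m (ghat g p (j : ℕ))
            ∈ Ideal.span {t ^ q - t} := by
          have := poly_aeval_sub_mem (Ideal.span {t ^ q - t}) (t ^ q) t
            (Ideal.subset_span rfl) (ghat g p (j : ℕ))
          rwa [hhq] at this
        have heq : X j ^ q - X j
            = (X j ^ q - yPoly m (ghat g p (j : ℕ)) ^ q)
              + (yPoly m (ghat g p (j : ℕ)) ^ q - yPoly m (ghat g p (j : ℕ)))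
              + -(X j - yPoly m (ghat g p (j : ℕ))) := by ring
        rw [heq]
        exact add_mem (add_mem (Ideal.mem_sup_left h2) (Ideal.mem_sup_right h3))
          (Ideal.mem_sup_left (S.neg_mem hXj))
      · have hj' : (j : ℕ) = m := by omega
        have hieq : j = ((m : ℕ) : Fin (m+1)) := by
          apply Fin.ext
          rw [hcast m le_rfl, hj']
        rw [hieq]
        exact Ideal.mem_sup_right (Ideal.subset_span rfl)
end
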